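/- arXiv:2106.07265 — 7 statements merged into one kernel-verified Lean document; each statement's English description precedes it below -/
import Mathlib

section
/- Let k be a non-negative, locally integrable, measurable function on (0,∞) and let ρ be a sigma-finite Borel measure on [0,∞) such that (k, ρ) forms a generalized Sonine pair, i.e. ∫_{[0,t]} k(t − s) dρ(s) = 1 for all t > 0. Define the semi-fractional integral I_{(k)} f(x) = ∫_{[0,x]} f(x − y) dρ(y) and the Riemann–Liouville type derivative D_{(k)} g(x) = (d/dx) ∫₀^x g(x − y) k(y) dy. Then for every continuous, locally bounded function f on [0,∞) and every x > 0, D_{(k)}(I_{(k)} f)(x) = f(x); that is, I_{(k)} is a right inverse of D_{(k)}. -/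
open MeasureTheory Set Filter Real
open scoped ENNReal

noncomputable section

/-- `ψ` is a Bernstein function: `C^∞` on `(0,∞)`, nonnegative on `(0,∞)`,
and `(−1)^(n−1) ψ^(n)(x) ≥ 0` for all `n ≥ 1` and `x > 0`. -/
def IsBernstein (ψ : ℝ → ℝ) : Prop :=
  ContDiffOn ℝ (⊤ : ℕ∞) ψ (Set.Ioi 0) ∧
  (∀ x > (0:ℝ), 0 ≤ ψ x) ∧
  ∀ n : ℕ, 0 < n → ∀ x > (0:ℝ), 0 ≤ (-1 : ℝ) ^ (n - 1) * iteratedDeriv n ψ x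

/-- `ψ` is a self-similar Bernstein function w.r.t. `α` and `c`:
it is Bernstein and `ψ(c^(1/α) x) = c·ψ(x)` for all `x > 0`. -/
def IsSelfSimilarBernstein (ψ : ℝ → ℝ) (α c : ℝ) : Prop :=
  IsBernstein ψ ∧ ∀ x > (0:ℝ), ψ (c ^ (1/α) * x) = c * ψ x

/-- `θ` is admissable w.r.t. `α` and `c`: positive, `t ↦ t^(−α) θ(log t)` non-increasing
on `(0,∞)`, and `log (c^(1/α))`-periodic. -/
def IsAdmissable (θ : ℝ → ℝ) (α c : ℝ) : Prop :=
  (∀ x : ℝ, 0 < θ x) ∧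
  AntitoneOn (fun t : ℝ => t ^ (-α) * θ (Real.log t)) (Set.Ioi 0) ∧
  Function.Periodic θ (Real.log (c ^ (1/α)))

/-- `φ` is the Borel measure concentrated on `(0,∞)` with tail
`φ((t,∞)) = t^(−α) θ(log t)` for `t > 0`. -/
def IsTailMeasure (φ : MeasureTheory.Measure ℝ) (α : ℝ) (θ : ℝ → ℝ) : Prop :=
  φ (Set.Iic 0) = 0 ∧
  ∀ t > (0:ℝ), φ (Set.Ioi t) = ENNReal.ofReal (t ^ (-α) * θ (Real.log t))

/-- `θ` is "smooth" in the sense of the paper: continuous and piecewise continuously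
differentiable (here: `C¹` off a closed countable set). -/
def IsPiecewiseC1 (θ : ℝ → ℝ) : Prop :=
  Continuous θ ∧ ∃ S : Set ℝ, S.Countable ∧ IsClosed S ∧ ContDiffOn ℝ 1 θ Sᶜ


lemma countable_atoms (ρ : Measure ℝ) [SigmaFinite ρ] :
    Set.Countable {t : ℝ | ρ {t} ≠ 0} := by
  have h := MeasureTheory.Measure.countable_meas_pos_of_disjoint_iUnion
    (μ := ρ) (As := fun t : ℝ => {t}) (fun t => measurableSet_singleton t)
    (fun s t hst => by simp [Function.onFun, Set.disjoint_singleton, hst])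
  refine h.mono ?_
  intro t ht
  simpa [pos_iff_ne_zero] using ht

lemma aeq_Icc_Iic (ρ : Measure ℝ) (hρ0 : ρ (Set.Iio 0) = 0) (c : ℝ) :
    (Set.Icc (0:ℝ) c : Set ℝ) =ᵐ[ρ] Set.Iic c := by
  have h0 : ∀ᵐ z ∂ρ, (0:ℝ) ≤ z := by
    rw [ae_iff]
    simp only [not_le]; exact hρ0
  filter_upwards [h0] with z hz
  show (z ∈ Set.Icc (0:ℝ) c) = (z ∈ Set.Iic c)
  simp [Set.mem_Icc, Set.mem_Iic, hz]

lemma sonine' (k : ℝ → ℝ) (ρ : Measure ℝ) (hρ0 : ρ (Set.Iio 0) = 0)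
    (hSonine : ∀ t > (0:ℝ), ∫ s in Set.Icc (0:ℝ) t, k (t - s) ∂ρ = 1)
    (k' : ℝ → ℝ) (hk' : ∀ y : ℝ, 0 < y → k' y = k y)
    {t : ℝ} (ht : 0 < t) (hat : ρ {t} = 0) :
    Integrable (fun s => k' (t - s)) (ρ.restrict (Set.Iic t)) ∧
      ∫ s in Set.Iic t, k' (t - s) ∂ρ = 1 := by
  have h1 : ∫ s in Set.Iic t, k' (t - s) ∂ρ = 1 := by
    rw [← setIntegral_congr_set (aeq_Icc_Iic ρ hρ0 t)]
    rw [← hSonine t ht]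
    refine setIntegral_congr_ae measurableSet_Icc ?_
    have hne : ∀ᵐ s ∂ρ, s ≠ t := by
      rw [ae_iff]
      simpa using hat
    filter_upwards [hne] with s hs hmem
    exact hk' _ (by rcases hmem with ⟨h0, h1⟩; cases lt_or_eq_of_le h1 with
      | inl h => linarith
      | inr h => exact absurd h hs)
  refine ⟨?_, h1⟩
  by_contra hni
  rw [integral_undef hni] at h1
  exact one_ne_zero h1.symm

lemma keyB (k' : ℝ → ℝ) (hkm : Measurable k')
    (ρ : Measure ℝ) [SigmaFinite ρ] (hρ0 : ρ (Set.Iio 0) = 0)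
    (hS : ∀ t : ℝ, 0 < t → ρ {t} = 0 →
      ∫⁻ s in Set.Iic t, ENNReal.ofReal (k' (t - s)) ∂ρ = 1)
    (hD : Set.Countable {t : ℝ | ρ {t} ≠ 0})
    {u : ℝ} (hu : 0 < u) :
    ∫⁻ z in Set.Iic u, (∫⁻ y in Set.Ioc (0:ℝ) (u - z), ENNReal.ofReal (k' y)) ∂ρ
      ≤ ENNReal.ofReal u := by
  set K : ℝ → ℝ≥0∞ := fun y => ENNReal.ofReal (k' y) with hK
  have hKm : Measurable K := hkm.ennreal_ofReal
  set F : ℝ × ℝ → ℝ≥0∞ :=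
    ({p : ℝ × ℝ | p.1 < p.2 ∧ p.2 ≤ u}).indicator (fun p => K (p.2 - p.1)) with hF
  have hFm : Measurable F := by
    refine Measurable.indicator ?_ ?_
    · exact (hKm.comp (measurable_snd.sub measurable_fst))
    · exact MeasurableSet.inter (measurableSet_lt measurable_fst measurable_snd)
        (measurableSet_le measurable_snd measurable_const)
  have step1 : ∀ z : ℝ, ∫⁻ y in Set.Ioc (0:ℝ) (u - z), K y = ∫⁻ t, F (z, t) := by
    intro z
    have hfun : (fun t => F (z, t)) =
        fun t => ((Set.Ioc (0:ℝ) (u - z)).indicator K) (t - z) := by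
      funext t
      by_cases h : z < t ∧ t ≤ u
      · rw [hF, Set.indicator_of_mem (by exact h), Set.indicator_of_mem (by
          constructor <;> [linarith [h.1]; linarith [h.2]])]
      · rw [hF, Set.indicator_of_notMem (by exact h), Set.indicator_of_notMem (by
          intro hc
          exact h ⟨by linarith [hc.1], by linarith [hc.2]⟩)]
    calc ∫⁻ y in Set.Ioc (0:ℝ) (u - z), K y
        = ∫⁻ y, ((Set.Ioc (0:ℝ) (u - z)).indicator K) y := by
          rw [lintegral_indicator measurableSet_Ioc]
      _ = ∫⁻ t, ((Set.Ioc (0:ℝ) (u - z)).indicator K) (t - z) := by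
          exact ((measurePreserving_sub_right volume z).lintegral_comp
            (hKm.indicator measurableSet_Ioc)).symm
      _ = ∫⁻ t, F (z, t) := by rw [← hfun]
  have h0 : ∀ᵐ z ∂ρ, (0:ℝ) ≤ z := by
    rw [ae_iff]; simp only [not_le]; exact hρ0
  have swap : ∫⁻ z in Set.Iic u, (∫⁻ t, F (z, t)) ∂ρ
      = ∫⁻ t, ∫⁻ z in Set.Iic u, F (z, t) ∂ρ :=
    lintegral_lintegral_swap hFm.aemeasurable
  have hρt : ∀ᵐ t : ℝ, ρ {t} = 0 := by
    rw [ae_iff]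
    exact hD.measure_zero _
  have hbound : ∀ᵐ t : ℝ, (∫⁻ z in Set.Iic u, F (z, t) ∂ρ)
      ≤ (Set.Ioc (0:ℝ) u).indicator (fun _ => (1:ℝ≥0∞)) t := by
    filter_upwards [hρt] with t hat
    by_cases htu : t ∈ Set.Ioc (0:ℝ) u
    · rw [Set.indicator_of_mem htu]
      have hfun2 : ∀ z : ℝ, F (z, t) = (Set.Iio t).indicator (fun z => K (t - z)) z := by
        intro z
        by_cases h : z < t
        · rw [hF, Set.indicator_of_mem (by exact ⟨h, htu.2⟩),
            Set.indicator_of_mem (show z ∈ Set.Iio t from h)]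
        · rw [hF, Set.indicator_of_notMem (fun hc => h hc.1),
            Set.indicator_of_notMem (show z ∉ Set.Iio t from h)]
      calc ∫⁻ z in Set.Iic u, F (z, t) ∂ρ
          = ∫⁻ z in Set.Iic u, (Set.Iio t).indicator (fun z => K (t - z)) z ∂ρ := by
            exact lintegral_congr fun z => hfun2 z
        _ = ∫⁻ z in Set.Iio t ∩ Set.Iic u, K (t - z) ∂ρ := by
            rw [lintegral_indicator measurableSet_Iio,
              Measure.restrict_restrict measurableSet_Iio]
        _ ≤ ∫⁻ z in Set.Iic t, K (t - z) ∂ρ := by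
            refine lintegral_mono' (Measure.restrict_mono ?_ le_rfl) le_rfl
            exact fun z hz => Set.mem_Iic.2 (le_of_lt hz.1)
        _ = 1 := hS t htu.1 hat
    · rw [Set.indicator_of_notMem htu]
      rw [Set.mem_Ioc, not_and_or, not_lt, not_le] at htu
      rcases htu with ht0 | htu
      · have : ∀ᵐ z ∂(ρ.restrict (Set.Iic u)), F (z, t) = 0 := by
          filter_upwards [ae_restrict_of_ae h0] with z hz
          rw [hF, Set.indicator_of_notMem]
          intro hc
          linarith [hc.1]
        rw [lintegral_congr_ae this, lintegral_zero]
      · have : ∀ z : ℝ, F (z, t) = 0 := by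
          intro z
          rw [hF, Set.indicator_of_notMem]
          intro hc
          linarith [hc.2]
        simp [this]
  calc ∫⁻ z in Set.Iic u, (∫⁻ y in Set.Ioc (0:ℝ) (u - z), K y) ∂ρ
      = ∫⁻ z in Set.Iic u, (∫⁻ t, F (z, t)) ∂ρ := by
        exact lintegral_congr fun z => step1 z
    _ = ∫⁻ t, ∫⁻ z in Set.Iic u, F (z, t) ∂ρ := swap
    _ ≤ ∫⁻ t, (Set.Ioc (0:ℝ) u).indicator (fun _ => (1:ℝ≥0∞)) t := lintegral_mono_ae hbound
    _ = ENNReal.ofReal u := by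
        rw [lintegral_indicator measurableSet_Ioc]
        simp [Real.volume_Ioc]

lemma seteq_inner {u z : ℝ} (hz : 0 ≤ z) :
    Set.Iic (u - z) ∩ Set.Ioc (0:ℝ) u = Set.Ioc (0:ℝ) (u - z) := by
  ext y
  simp only [Set.mem_inter_iff, Set.mem_Iic, Set.mem_Ioc]
  constructor
  · rintro ⟨h1, h2, h3⟩; exact ⟨h2, h1⟩
  · rintro ⟨h1, h2⟩; exact ⟨h2, h1, by linarith⟩

lemma lint_inner (K : ℝ → ℝ≥0∞) {u z : ℝ} (hz : 0 ≤ z) :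
    ∫⁻ y in Set.Ioc (0:ℝ) u, (Set.Iic (u - z)).indicator K y
      = ∫⁻ y in Set.Ioc (0:ℝ) (u - z), K y := by
  rw [lintegral_indicator measurableSet_Iic, Measure.restrict_restrict measurableSet_Iic,
    seteq_inner hz]

lemma boch_inner (h : ℝ → ℝ) {u z : ℝ} (hz : 0 ≤ z) :
    ∫ w in Set.Ioc (0:ℝ) u, (Set.Iic (u - z)).indicator h w
      = ∫ w in Set.Ioc (0:ℝ) (u - z), h w := by
  rw [integral_indicator measurableSet_Iic, Measure.restrict_restrict measurableSet_Iic,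
    seteq_inner hz]

lemma lint_reflect (K : ℝ → ℝ≥0∞) (hKm : Measurable K) (t : ℝ) :
    ∫⁻ w in Set.Ioc (0:ℝ) t, K (t - w) = ∫⁻ y in Set.Ioc (0:ℝ) t, K y := by
  have h1 : ∫⁻ w in Set.Ioc (0:ℝ) t, K (t - w)
      = ∫⁻ w, ((Set.Ico (0:ℝ) t).indicator K) (t - w) := by
    rw [← lintegral_indicator measurableSet_Ioc]
    refine lintegral_congr fun w => ?_
    by_cases h : w ∈ Set.Ioc (0:ℝ) t
    · rw [Set.indicator_of_mem h, Set.indicator_of_mem (show t - w ∈ Set.Ico (0:ℝ) t by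
        rcases h with ⟨h1, h2⟩; exact ⟨by linarith, by linarith⟩)]
    · rw [Set.indicator_of_notMem h, Set.indicator_of_notMem (show t - w ∉ Set.Ico (0:ℝ) t by
        intro hc
        rcases hc with ⟨h1, h2⟩
        exact h ⟨by linarith, by linarith⟩)]
  rw [h1, (Measure.measurePreserving_sub_left volume t).lintegral_comp
    (hKm.indicator measurableSet_Ico), lintegral_indicator measurableSet_Ico,
    setLIntegral_congr Ico_ae_eq_Ioc]

lemma main_identity (k' : ℝ → ℝ) (hk0 : ∀ y, 0 ≤ k' y) (hkm : Measurable k')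
    (ρ : Measure ℝ) [SigmaFinite ρ] (hρ0 : ρ (Set.Iio 0) = 0)
    (hD : Set.Countable {t : ℝ | ρ {t} ≠ 0})
    (hSon : ∀ t : ℝ, 0 < t → ρ {t} = 0 →
      Integrable (fun s => k' (t - s)) (ρ.restrict (Set.Iic t)) ∧
        ∫ s in Set.Iic t, k' (t - s) ∂ρ = 1)
    (g : ℝ → ℝ) (hg : Continuous g) (C : ℝ) (hgC : ∀ w, |g w| ≤ C)
    {u : ℝ} (hu : 0 < u) :
    ∫ y in Set.Ioc (0:ℝ) u, (∫ z in Set.Icc (0:ℝ) (u - y), g (u - y - z) ∂ρ) * k' y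
      = ∫ w in Set.Ioc (0:ℝ) u, g w := by
  have hC0 : (0:ℝ) ≤ C := le_trans (abs_nonneg _) (hgC 0)
  set K : ℝ → ℝ≥0∞ := fun y => ENNReal.ofReal (k' y) with hKdef
  have hKm : Measurable K := hkm.ennreal_ofReal
  have hS : ∀ t : ℝ, 0 < t → ρ {t} = 0 →
      ∫⁻ s in Set.Iic t, ENNReal.ofReal (k' (t - s)) ∂ρ = 1 := by
    intro t ht hat
    have h := ofReal_integral_eq_lintegral_ofReal (hSon t ht hat).1
      (Filter.Eventually.of_forall fun s => hk0 _)
    rw [(hSon t ht hat).2] at h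
    simpa using h.symm
  have hkey := keyB k' hkm ρ hρ0 hS hD hu
  set ν := ρ.restrict (Set.Iic u) with hν
  set μ := volume.restrict (Set.Ioc (0:ℝ) u) with hμ
  have hν0 : ∀ᵐ z ∂ν, (0:ℝ) ≤ z := by
    refine ae_restrict_of_ae ?_
    rw [ae_iff]; simp only [not_le]; exact hρ0
  have hνu : ∀ᵐ z ∂ν, z ≤ u := by
    filter_upwards [ae_restrict_mem measurableSet_Iic] with z hz using hz
  set S₁ : Set (ℝ × ℝ) := {p : ℝ × ℝ | p.2 ≤ u - p.1} with hS₁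
  have hS₁m : MeasurableSet S₁ :=
    measurableSet_le measurable_snd (measurable_const.sub measurable_fst)
  -- First Fubini data
  set g₁ : ℝ × ℝ → ℝ := S₁.indicator (fun p => g (u - p.1 - p.2) * k' p.1) with hg₁
  have hg₁m : Measurable g₁ :=
    ((hg.measurable.comp ((measurable_const.sub measurable_fst).sub measurable_snd)).mul
      (hkm.comp measurable_fst)).indicator hS₁m
  have hint₁ : Integrable g₁ (μ.prod ν) := by
    refine ⟨hg₁m.aestronglyMeasurable, ?_⟩
    have hb : ∀ p : ℝ × ℝ, (‖g₁ p‖₊ : ℝ≥0∞)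
        ≤ ENNReal.ofReal C * S₁.indicator (fun p : ℝ × ℝ => K p.1) p := by
      intro p
      by_cases hp : p ∈ S₁
      · rw [hg₁, Set.indicator_of_mem hp, Set.indicator_of_mem hp,
          ← enorm_eq_nnnorm, Real.enorm_eq_ofReal_abs, ← ENNReal.ofReal_mul hC0]
        refine ENNReal.ofReal_le_ofReal ?_
        rw [abs_mul, abs_of_nonneg (hk0 _)]
        exact mul_le_mul_of_nonneg_right (le_trans le_rfl (hgC _)) (hk0 _)
      · simp [hg₁, Set.indicator_of_notMem hp]
    have hindm : Measurable (S₁.indicator (fun p : ℝ × ℝ => K p.1)) :=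
      (hKm.comp measurable_fst).indicator hS₁m
    have hlind : ∫⁻ p, S₁.indicator (fun p : ℝ × ℝ => K p.1) p ∂(μ.prod ν)
        ≤ ENNReal.ofReal u := by
      rw [lintegral_prod_symm _ hindm.aemeasurable]
      have hinner : ∀ᵐ z ∂ν, (∫⁻ y, S₁.indicator (fun p : ℝ × ℝ => K p.1) (y, z) ∂μ)
          = ∫⁻ y in Set.Ioc (0:ℝ) (u - z), K y := by
        filter_upwards [hν0] with z hz
        have : ∀ y : ℝ, S₁.indicator (fun p : ℝ × ℝ => K p.1) (y, z)
            = (Set.Iic (u - z)).indicator K y := by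
          intro y
          by_cases h : y ≤ u - z
          · rw [Set.indicator_of_mem (show (y, z) ∈ S₁ from by
              simp only [hS₁, Set.mem_setOf_eq]; linarith),
              Set.indicator_of_mem (show y ∈ Set.Iic (u - z) from h)]
          · rw [Set.indicator_of_notMem (show (y, z) ∉ S₁ from by
              simp only [hS₁, Set.mem_setOf_eq]; intro hc; exact h (by linarith)),
              Set.indicator_of_notMem (show y ∉ Set.Iic (u - z) from h)]
        rw [lintegral_congr this, hμ, lint_inner K hz]
      rw [lintegral_congr_ae hinner]
      exact hkey
    calc ∫⁻ p, (‖g₁ p‖₊ : ℝ≥0∞) ∂(μ.prod ν)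
        ≤ ∫⁻ p, ENNReal.ofReal C * S₁.indicator (fun p : ℝ × ℝ => K p.1) p ∂(μ.prod ν) :=
          lintegral_mono hb
      _ = ENNReal.ofReal C * ∫⁻ p, S₁.indicator (fun p : ℝ × ℝ => K p.1) p ∂(μ.prod ν) :=
          lintegral_const_mul _ hindm
      _ ≤ ENNReal.ofReal C * ENNReal.ofReal u := by
          exact mul_le_mul_right hlind _
      _ < ⊤ := ENNReal.mul_lt_top ENNReal.ofReal_lt_top ENNReal.ofReal_lt_top
  -- second Fubini data
  set g₂ : ℝ × ℝ → ℝ := S₁.indicator (fun p => g p.2 * k' (u - p.1 - p.2)) with hg₂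
  have hg₂m : Measurable g₂ :=
    ((hg.measurable.comp measurable_snd).mul
      (hkm.comp ((measurable_const.sub measurable_fst).sub measurable_snd))).indicator hS₁m
  have hint₂ : Integrable g₂ (ν.prod μ) := by
    refine ⟨hg₂m.aestronglyMeasurable, ?_⟩
    have hb : ∀ p : ℝ × ℝ, (‖g₂ p‖₊ : ℝ≥0∞)
        ≤ ENNReal.ofReal C * S₁.indicator (fun p : ℝ × ℝ => K (u - p.1 - p.2)) p := by
      intro p
      by_cases hp : p ∈ S₁
      · rw [hg₂, Set.indicator_of_mem hp, Set.indicator_of_mem hp,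
          ← enorm_eq_nnnorm, Real.enorm_eq_ofReal_abs, ← ENNReal.ofReal_mul hC0]
        refine ENNReal.ofReal_le_ofReal ?_
        rw [abs_mul, abs_of_nonneg (hk0 _)]
        exact mul_le_mul_of_nonneg_right (hgC _) (hk0 _)
      · simp [hg₂, Set.indicator_of_notMem hp]
    have hindm : Measurable (S₁.indicator (fun p : ℝ × ℝ => K (u - p.1 - p.2))) :=
      (hKm.comp ((measurable_const.sub measurable_fst).sub measurable_snd)).indicator hS₁m
    have hlind : ∫⁻ p, S₁.indicator (fun p : ℝ × ℝ => K (u - p.1 - p.2)) p ∂(ν.prod μ)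
        ≤ ENNReal.ofReal u := by
      rw [lintegral_prod _ hindm.aemeasurable]
      have hinner : ∀ᵐ z ∂ν, (∫⁻ w, S₁.indicator (fun p : ℝ × ℝ => K (u - p.1 - p.2)) (z, w) ∂μ)
          = ∫⁻ y in Set.Ioc (0:ℝ) (u - z), K y := by
        filter_upwards [hν0] with z hz
        have heq : ∀ w : ℝ, S₁.indicator (fun p : ℝ × ℝ => K (u - p.1 - p.2)) (z, w)
            = (Set.Iic (u - z)).indicator (fun w => K (u - z - w)) w := by
          intro w
          by_cases h : w ≤ u - z
          · rw [Set.indicator_of_mem (show (z, w) ∈ S₁ from h),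
              Set.indicator_of_mem (show w ∈ Set.Iic (u - z) from h)]
          · rw [Set.indicator_of_notMem (show (z, w) ∉ S₁ from h),
              Set.indicator_of_notMem (show w ∉ Set.Iic (u - z) from h)]
        rw [lintegral_congr heq, hμ, lint_inner (fun w => K (u - z - w)) hz,
          lint_reflect K hKm (u - z)]
      rw [lintegral_congr_ae hinner]
      exact hkey
    calc ∫⁻ p, (‖g₂ p‖₊ : ℝ≥0∞) ∂(ν.prod μ)
        ≤ ∫⁻ p, ENNReal.ofReal C * S₁.indicator (fun p : ℝ × ℝ => K (u - p.1 - p.2)) p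
            ∂(ν.prod μ) := lintegral_mono hb
      _ = ENNReal.ofReal C
            * ∫⁻ p, S₁.indicator (fun p : ℝ × ℝ => K (u - p.1 - p.2)) p ∂(ν.prod μ) :=
          lintegral_const_mul _ hindm
      _ ≤ ENNReal.ofReal C * ENNReal.ofReal u := mul_le_mul_right hlind _
      _ < ⊤ := ENNReal.mul_lt_top ENNReal.ofReal_lt_top ENNReal.ofReal_lt_top
  -- identify LHS
  have hL : (∫ y, (∫ z, g₁ (y, z) ∂ν) ∂μ)
      = ∫ y in Set.Ioc (0:ℝ) u, (∫ z in Set.Icc (0:ℝ) (u - y), g (u - y - z) ∂ρ) * k' y := by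
    rw [hμ]
    refine setIntegral_congr_fun measurableSet_Ioc fun y hy => ?_
    have hy0 : 0 < y := hy.1
    have hyu : y ≤ u := hy.2
    calc ∫ z, g₁ (y, z) ∂ν
        = ∫ z, (Set.Iic (u - y)).indicator (fun z => g (u - y - z) * k' y) z ∂ν := by
          refine integral_congr_ae (Filter.Eventually.of_forall fun z => ?_)
          beta_reduce
          by_cases h : z ≤ u - y
          · rw [hg₁, Set.indicator_of_mem (show (y, z) ∈ S₁ from h),
              Set.indicator_of_mem (show z ∈ Set.Iic (u - y) from h)]
          · rw [hg₁, Set.indicator_of_notMem (show (y, z) ∉ S₁ from h),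
              Set.indicator_of_notMem (show z ∉ Set.Iic (u - y) from h)]
      _ = ∫ z in Set.Iic (u - y), g (u - y - z) * k' y ∂ν :=
          integral_indicator measurableSet_Iic
      _ = ∫ z in Set.Iic (u - y), g (u - y - z) * k' y ∂ρ := by
          rw [hν, Measure.restrict_restrict measurableSet_Iic, Set.Iic_inter_Iic,
            min_eq_left (by linarith : u - y ≤ u)]
      _ = ∫ z in Set.Icc (0:ℝ) (u - y), g (u - y - z) * k' y ∂ρ :=
          (setIntegral_congr_set (aeq_Icc_Iic ρ hρ0 _)).symm
      _ = (∫ z in Set.Icc (0:ℝ) (u - y), g (u - y - z) ∂ρ) * k' y :=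
          integral_mul_const _ _
  -- middle step
  have hAB : ∀ᵐ z ∂ν, (∫ y, g₁ (y, z) ∂μ) = ∫ w, g₂ (z, w) ∂μ := by
    filter_upwards [hν0, hνu] with z hz hzu
    have refl1 : ∫ w in (0:ℝ)..(u - z), g w * k' (u - z - w)
        = ∫ y in (0:ℝ)..(u - z), g (u - y - z) * k' y := by
      have h1 := intervalIntegral.integral_comp_sub_left (a := (0:ℝ)) (b := u - z)
        (fun s => g (u - s - z) * k' s) (u - z)
      simp only [sub_self, sub_zero] at h1
      rw [← h1]
      refine intervalIntegral.integral_congr fun x hx => ?_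
      have hx' : u - (u - z - x) - z = x := by ring
      rw [hx']
    calc ∫ y, g₁ (y, z) ∂μ
        = ∫ y, (Set.Iic (u - z)).indicator (fun y => g (u - y - z) * k' y) y ∂μ := by
          refine integral_congr_ae (Filter.Eventually.of_forall fun y => ?_)
          beta_reduce
          by_cases h : y ≤ u - z
          · rw [hg₁, Set.indicator_of_mem (show (y, z) ∈ S₁ from by
              simp only [hS₁, Set.mem_setOf_eq]; linarith),
              Set.indicator_of_mem (show y ∈ Set.Iic (u - z) from h)]
          · rw [hg₁, Set.indicator_of_notMem (show (y, z) ∉ S₁ from by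
              simp only [hS₁, Set.mem_setOf_eq]; intro hc; exact h (by linarith)),
              Set.indicator_of_notMem (show y ∉ Set.Iic (u - z) from h)]
      _ = ∫ y in Set.Ioc (0:ℝ) (u - z), g (u - y - z) * k' y := by
          rw [hμ, boch_inner _ hz]
      _ = ∫ y in (0:ℝ)..(u - z), g (u - y - z) * k' y :=
          (intervalIntegral.integral_of_le (by linarith)).symm
      _ = ∫ w in (0:ℝ)..(u - z), g w * k' (u - z - w) := refl1.symm
      _ = ∫ w in Set.Ioc (0:ℝ) (u - z), g w * k' (u - z - w) :=
          intervalIntegral.integral_of_le (by linarith)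
      _ = ∫ w, (Set.Iic (u - z)).indicator (fun w => g w * k' (u - z - w)) w ∂μ := by
          rw [hμ, boch_inner _ hz]
      _ = ∫ w, g₂ (z, w) ∂μ := by
          refine integral_congr_ae (Filter.Eventually.of_forall fun w => ?_)
          beta_reduce
          by_cases h : w ≤ u - z
          · rw [hg₂, Set.indicator_of_mem (show (z, w) ∈ S₁ from h),
              Set.indicator_of_mem (show w ∈ Set.Iic (u - z) from h)]
          · rw [hg₂, Set.indicator_of_notMem (show (z, w) ∉ S₁ from h),
              Set.indicator_of_notMem (show w ∉ Set.Iic (u - z) from h)]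
  -- final step
  have hwu : ∀ᵐ w ∂μ, w ≠ u := by
    refine ae_restrict_of_ae ?_
    rw [ae_iff]
    simpa using Real.volume_singleton (a := u)
  have hρw : ∀ᵐ w ∂μ, ρ {u - w} = 0 := by
    refine ae_restrict_of_ae ?_
    rw [ae_iff]
    have himg : {w : ℝ | ¬ ρ {u - w} = 0} = (fun t => u - t) '' {t : ℝ | ρ {t} ≠ 0} := by
      ext w
      simp only [Set.mem_setOf_eq, Set.mem_image]
      constructor
      · intro h; exact ⟨u - w, h, by ring⟩
      · rintro ⟨t, ht, rfl⟩; simpa using ht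
    rw [himg]
    exact Set.Countable.measure_zero (hD.image _) _
  have hfinal : ∀ᵐ w ∂μ, (∫ z, g₂ (z, w) ∂ν) = g w := by
    filter_upwards [ae_restrict_mem measurableSet_Ioc, hwu, hρw] with w hw hwu' hρw'
    have hw0 : 0 < w := hw.1
    have hwltu : w < u := lt_of_le_of_ne hw.2 hwu'
    calc ∫ z, g₂ (z, w) ∂ν
        = ∫ z, (Set.Iic (u - w)).indicator (fun z => g w * k' (u - w - z)) z ∂ν := by
          refine integral_congr_ae (Filter.Eventually.of_forall fun z => ?_)
          beta_reduce
          by_cases h : z ≤ u - w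
          · rw [hg₂, Set.indicator_of_mem (show (z, w) ∈ S₁ from by
              simp only [hS₁, Set.mem_setOf_eq]; linarith),
              Set.indicator_of_mem (show z ∈ Set.Iic (u - w) from h)]
            have : u - z - w = u - w - z := by ring
            rw [this]
          · rw [hg₂, Set.indicator_of_notMem (show (z, w) ∉ S₁ from by
              simp only [hS₁, Set.mem_setOf_eq]; intro hc; exact h (by linarith)),
              Set.indicator_of_notMem (show z ∉ Set.Iic (u - w) from h)]
      _ = ∫ z in Set.Iic (u - w), g w * k' (u - w - z) ∂ν :=
          integral_indicator measurableSet_Iic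
      _ = ∫ z in Set.Iic (u - w), g w * k' (u - w - z) ∂ρ := by
          rw [hν, Measure.restrict_restrict measurableSet_Iic, Set.Iic_inter_Iic,
            min_eq_left (by linarith : u - w ≤ u)]
      _ = g w * ∫ z in Set.Iic (u - w), k' (u - w - z) ∂ρ := integral_const_mul _ _
      _ = g w * 1 := by rw [(hSon (u - w) (by linarith) hρw').2]
      _ = g w := mul_one _
  calc ∫ y in Set.Ioc (0:ℝ) u, (∫ z in Set.Icc (0:ℝ) (u - y), g (u - y - z) ∂ρ) * k' y
      = ∫ y, (∫ z, g₁ (y, z) ∂ν) ∂μ := hL.symm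
    _ = ∫ z, (∫ y, g₁ (y, z) ∂μ) ∂ν := integral_integral_swap hint₁
    _ = ∫ z, (∫ w, g₂ (z, w) ∂μ) ∂ν := integral_congr_ae hAB
    _ = ∫ w, (∫ z, g₂ (z, w) ∂ν) ∂μ := integral_integral_swap hint₂
    _ = ∫ w, g w ∂μ := integral_congr_ae hfinal
    _ = ∫ w in Set.Ioc (0:ℝ) u, g w := by rw [hμ]

/-- for a generalized Sonine pair `(k, ρ)`, the Riemann–Liouville type
derivative `D_(k)` is a left inverse of the semi-fractional integral `I_(k)`:
`D_(k)(I_(k) f) = f`. -/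
theorem stmt5 (k : ℝ → ℝ) (hk_nonneg : ∀ y > (0:ℝ), 0 ≤ k y) (hk_meas : Measurable k)
    (hk_int : MeasureTheory.LocallyIntegrableOn k (Set.Ioi 0))
    (ρ : MeasureTheory.Measure ℝ) [SigmaFinite ρ] (hρ0 : ρ (Set.Iio 0) = 0)
    (hSonine : ∀ t > (0:ℝ), ∫ s in Set.Icc (0:ℝ) t, k (t - s) ∂ρ = 1)
    (f : ℝ → ℝ) (hf : ContinuousOn f (Set.Ici 0)) :
    ∀ x > (0:ℝ),
      deriv (fun u : ℝ => ∫ y in (0:ℝ)..u,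
        (∫ z in Set.Icc (0:ℝ) (u - y), f (u - y - z) ∂ρ) * k y) x = f x := by
  intro x hx
  set k' : ℝ → ℝ := fun y => if 0 < y then k y else 0 with hk'def
  have hk'0 : ∀ y, 0 ≤ k' y := by
    intro y
    by_cases h : 0 < y
    · simpa [hk'def, h] using hk_nonneg y h
    · simp [hk'def, h]
  have hk'm : Measurable k' := Measurable.ite measurableSet_Ioi hk_meas measurable_const
  have hD := countable_atoms ρ
  have hSon : ∀ t : ℝ, 0 < t → ρ {t} = 0 →
      Integrable (fun s => k' (t - s)) (ρ.restrict (Set.Iic t)) ∧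
        ∫ s in Set.Iic t, k' (t - s) ∂ρ = 1 :=
    fun t ht hat => sonine' k ρ hρ0 (fun t ht => hSonine t ht) k' (fun y hy => if_pos hy) ht hat
  have hev : (fun u : ℝ => ∫ y in (0:ℝ)..u,
        (∫ z in Set.Icc (0:ℝ) (u - y), f (u - y - z) ∂ρ) * k y)
      =ᶠ[nhds x] (fun u : ℝ => ∫ w in (0:ℝ)..u, f w) := by
    filter_upwards [isOpen_Ioi.mem_nhds hx] with u hu
    have hu0 : (0:ℝ) < u := hu
    set c : ℝ → ℝ := fun w => min (max w 0) u with hcdef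
    have hc : Continuous c := (continuous_id.max continuous_const).min continuous_const
    have hrange : ∀ w, c w ∈ Set.Icc (0:ℝ) u := by
      intro w
      constructor
      · exact le_min (le_max_right _ _) hu0.le
      · exact min_le_right _ _
    have hcid : ∀ w, w ∈ Set.Icc (0:ℝ) u → c w = w := by
      intro w hw
      rw [hcdef]
      simp only
      rw [max_eq_left hw.1, min_eq_left hw.2]
    set g : ℝ → ℝ := fun w => f (c w) with hgdef
    have hg : Continuous g := hf.comp_continuous hc fun w => (hrange w).1
    obtain ⟨C, hC⟩ : ∃ C, ∀ w ∈ Set.Icc (0:ℝ) u, ‖f w‖ ≤ C :=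
      isCompact_Icc.exists_bound_of_continuousOn
        (hf.mono (Set.Icc_subset_Ici_self))
    have hgC : ∀ w, |g w| ≤ C := by
      intro w
      simpa [hgdef, Real.norm_eq_abs] using hC _ (hrange w)
    have hgf : ∀ w ∈ Set.Icc (0:ℝ) u, g w = f w := fun w hw => by
      rw [hgdef]; simp only; rw [hcid w hw]
    calc ∫ y in (0:ℝ)..u, (∫ z in Set.Icc (0:ℝ) (u - y), f (u - y - z) ∂ρ) * k y
        = ∫ y in Set.Ioc (0:ℝ) u,
            (∫ z in Set.Icc (0:ℝ) (u - y), f (u - y - z) ∂ρ) * k y :=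
          intervalIntegral.integral_of_le hu0.le
      _ = ∫ y in Set.Ioc (0:ℝ) u,
            (∫ z in Set.Icc (0:ℝ) (u - y), g (u - y - z) ∂ρ) * k' y := by
          refine setIntegral_congr_fun measurableSet_Ioc fun y hy => ?_
          have hky : k y = k' y := (if_pos hy.1).symm
          rw [← hky]
          congr 1
          refine setIntegral_congr_fun measurableSet_Icc fun z hz => ?_
          rw [hgf _ ⟨by linarith [hz.2], by linarith [hy.1, hz.1]⟩]
      _ = ∫ w in Set.Ioc (0:ℝ) u, g w :=
          main_identity k' hk'0 hk'm ρ hρ0 hD hSon g hg C hgC hu0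
      _ = ∫ w in Set.Ioc (0:ℝ) u, f w := by
          refine setIntegral_congr_fun measurableSet_Ioc fun w hw => ?_
          exact hgf _ ⟨hw.1.le, hw.2⟩
      _ = ∫ w in (0:ℝ)..u, f w := (intervalIntegral.integral_of_le hu0.le).symm
  rw [hev.deriv_eq]
  have hderiv : HasDerivAt (fun u : ℝ => ∫ w in (0:ℝ)..u, f w) (f x) x := by
    refine intervalIntegral.integral_hasDerivAt_right ?_ ?_ ?_
    · refine ContinuousOn.intervalIntegrable ?_
      refine hf.mono ?_
      rw [Set.uIcc_of_le hx.le]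
      exact Set.Icc_subset_Ici_self
    · exact ⟨Set.Ici 0, Ici_mem_nhds hx, hf.aestronglyMeasurable measurableSet_Ici⟩
    · exact hf.continuousAt (Ici_mem_nhds hx)
  exact hderiv.deriv
end
end

section
/- Let k be a non-negative, locally integrable, measurable function on (0,∞) and let ρ be a sigma-finite Borel measure on [0,∞) such that (k, ρ) forms a generalized Sonine pair, i.e. ∫_{[0,t]} k(t − s) dρ(s) = 1 for all t > 0. Define the semi-fractional integral I_{(k)} f(x) = ∫_{[0,x]} f(x − y) dρ(y) and, for an absolutely continuous function f on [0,∞) with almost-everywhere derivative f′, the Caputo type derivative D_{(k)} f(x) = ∫₀^x f′(x − y) k(y) dy. Then for every absolutely continuous function f on [0,∞) and every x > 0, I_{(k)}(D_{(k)} f)(x) = f(x) − f(0). -/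
open MeasureTheory Set Filter Real

noncomputable section

/-- for a generalized Sonine pair `(k, ρ)` and an absolutely continuous `f`
(on `[0,∞)`, with a.e. derivative `f'`), `I_(k)(D_(k) f)(x) = f(x) − f(0)`. -/
theorem stmt6 (k : ℝ → ℝ) (hk_nonneg : ∀ y > (0:ℝ), 0 ≤ k y) (hk_meas : Measurable k)
    (hk_int : MeasureTheory.LocallyIntegrableOn k (Set.Ioi 0))
    (ρ : MeasureTheory.Measure ℝ) [SigmaFinite ρ] (hρ0 : ρ (Set.Iio 0) = 0)
    (hSonine : ∀ t > (0:ℝ), ∫ s in Set.Icc (0:ℝ) t, k (t - s) ∂ρ = 1)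
    (f f' : ℝ → ℝ) (hf' : MeasureTheory.LocallyIntegrableOn f' (Set.Ici 0))
    (hAC : ∀ x ≥ (0:ℝ), f x = f 0 + ∫ t in (0:ℝ)..x, f' t) :
    ∀ x > (0:ℝ),
      ∫ y in Set.Icc (0:ℝ) x,
        (∫ s in (0:ℝ)..(x - y), f' (x - y - s) * k s) ∂ρ = f x - f 0 := by
  intro x hx
  -- measurable representative of `f'`
  obtain ⟨g, hg_meas, hg_ae⟩ : ∃ g : ℝ → ℝ, Measurable g ∧
      f' =ᵐ[volume.restrict (Set.Ici 0)] g := by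
    have h := (hf'.aestronglyMeasurable :
      AEStronglyMeasurable f' (volume.restrict (Set.Ici 0)))
    exact ⟨h.mk f', h.stronglyMeasurable_mk.measurable, h.ae_eq_mk⟩
  -- modified kernel vanishing on `(-∞, 0]`
  set k' : ℝ → ℝ := (Set.Ioi 0).indicator k with hk'def
  have hk'_meas : Measurable k' := hk_meas.indicator measurableSet_Ioi
  have hk'_pos : ∀ v > (0:ℝ), k' v = k v := fun v hv => Set.indicator_of_mem hv k
  have hk'_nonneg : ∀ v : ℝ, 0 ≤ k' v := by
    intro v
    rw [hk'def]
    by_cases h : v ∈ Set.Ioi (0:ℝ)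
    · rw [Set.indicator_of_mem h]; exact hk_nonneg v h
    · rw [Set.indicator_of_notMem h]
  have hk'_norm : ∀ v : ℝ, ‖k' v‖ ≤ ‖k v‖ := by
    intro v
    rw [hk'def]
    by_cases h : v ∈ Set.Ioi (0:ℝ)
    · rw [Set.indicator_of_mem h]
    · rw [Set.indicator_of_notMem h]; simp
  -- the Sonine condition yields integrability
  have hInt_k : ∀ t > (0:ℝ), IntegrableOn (fun s => k (t - s)) (Set.Icc 0 t) ρ := by
    intro t ht
    by_contra h
    have h0 := integral_undef h
    rw [hSonine t ht] at h0
    exact one_ne_zero h0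
  have hInt_k' : ∀ t > (0:ℝ), IntegrableOn (fun s => k' (t - s)) (Set.Icc 0 t) ρ := by
    intro t ht
    exact Integrable.mono (hInt_k t ht)
      ((hk'_meas.comp (measurable_const.sub measurable_id)).aestronglyMeasurable)
      (ae_of_all _ fun s => hk'_norm _)
  have hIciIcc : ∀ t : ℝ, 0 < t → Set.Ici t ∩ Set.Icc (0:ℝ) t = {t} := by
    intro t ht
    ext z
    simp only [Set.mem_inter_iff, Set.mem_Ici, Set.mem_Icc, Set.mem_singleton_iff]
    constructor
    · rintro ⟨h1, _, h3⟩; linarith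
    · rintro rfl; exact ⟨le_refl _, le_of_lt ht, le_refl _⟩
  have hSonine' : ∀ t > (0:ℝ), ρ {t} = 0 → ∫ s in Set.Icc (0:ℝ) t, k' (t - s) ∂ρ = 1 := by
    intro t ht hatom
    have hae : (fun s => k' (t - s)) =ᵐ[ρ.restrict (Set.Icc 0 t)] (fun s => k (t - s)) := by
      rw [Filter.EventuallyEq, ae_iff]
      refine measure_mono_null (t := Set.Ici t) (fun s hs => ?_) ?_
      · show s ∈ Set.Ici t
        simp only [Set.mem_setOf_eq] at hs
        by_contra hst
        simp only [Set.mem_Ici, not_le] at hst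
        exact hs (hk'_pos _ (by linarith))
      · rw [Measure.restrict_apply measurableSet_Ici, hIciIcc t ht]
        exact hatom
    rw [integral_congr_ae hae, hSonine t ht]
  -- the atoms of `ρ` give a Lebesgue-null set of bad points
  have hUae : ∀ᵐ u : ℝ ∂volume, ρ {x - u} = 0 := by
    rw [ae_iff]
    have hcount : Set.Countable {t : ℝ | 0 < ρ {t}} := by
      have h := Measure.countable_meas_level_set_pos (μ := ρ) (g := (id : ℝ → ℝ)) measurable_id
      simpa using h
    refine measure_mono_null (fun u hu => ?_) (((hcount.image (fun t => x - t)).measure_zero _))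
    simp only [Set.mem_setOf_eq] at hu
    exact ⟨x - u, by simpa [pos_iff_ne_zero] using hu, by ring⟩
  have hne : ∀ᵐ u : ℝ ∂volume, u ≠ x := by
    rw [ae_iff]
    simpa [Set.setOf_eq_eq_singleton] using Real.volume_singleton (a := x)
  -- the double-integrand
  set S : Set (ℝ × ℝ) := {q | 0 < q.2 ∧ q.2 ≤ x - q.1} with hSdef
  have hS : MeasurableSet S := by
    have h1 : S = {q : ℝ × ℝ | 0 < q.2} ∩ {q : ℝ × ℝ | q.2 ≤ x - q.1} := rfl
    rw [h1]
    exact (measurableSet_lt measurable_const measurable_snd).inter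
      (measurableSet_le measurable_snd (measurable_const.sub measurable_fst))
  set F : ℝ × ℝ → ℝ := S.indicator (fun q => g q.2 * k' (x - q.1 - q.2)) with hFdef
  have hF_meas : Measurable F :=
    ((hg_meas.comp measurable_snd).mul
      (hk'_meas.comp ((measurable_const.sub measurable_fst).sub measurable_snd))).indicator hS
  have hsecu : ∀ y : ℝ,
      (fun u => F (y, u)) = (Set.Ioc 0 (x - y)).indicator (fun u => g u * k' (x - y - u)) := by
    intro y; funext u
    simp only [hFdef, hSdef, Set.indicator_apply, Set.mem_setOf_eq, Set.mem_Ioc]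
  have hsecy : ∀ u : ℝ, 0 < u →
      (fun y => F (y, u)) = (Set.Iic (x - u)).indicator (fun y => g u * k' ((x - u) - y)) := by
    intro u hu; funext y
    by_cases h : u ≤ x - y
    · rw [hFdef, Set.indicator_of_mem (show (y, u) ∈ S from ⟨hu, h⟩),
        Set.indicator_of_mem (show y ∈ Set.Iic (x - u) from by
          simp only [Set.mem_Iic]; linarith)]
      rw [sub_right_comm]
    · rw [hFdef, Set.indicator_of_notMem (fun hc => h hc.2),
        Set.indicator_of_notMem (show y ∉ Set.Iic (x - u) from by
          simp only [Set.mem_Iic, not_le]; linarith [not_le.mp h])]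
  have hsecnorm : ∀ u : ℝ, 0 < u →
      (fun y => ‖F (y, u)‖) = (Set.Iic (x - u)).indicator (fun y => ‖g u‖ * k' ((x - u) - y)) := by
    intro u hu; funext y
    rw [show F (y, u) = (Set.Iic (x - u)).indicator (fun y => g u * k' ((x - u) - y)) y from
      congrFun (hsecy u hu) y, norm_indicator_eq_indicator_norm]
    congr 1
    funext z
    rw [norm_mul, Real.norm_of_nonneg (hk'_nonneg _)]
  have hint_set : ∀ t : ℝ, 0 ≤ t → t ≤ x →
      Set.Iic t ∩ Set.Icc (0:ℝ) x = Set.Icc 0 t := by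
    intro t ht htx
    ext z
    simp only [Set.mem_inter_iff, Set.mem_Iic, Set.mem_Icc]
    constructor
    · rintro ⟨h1, h2, _⟩; exact ⟨h2, h1⟩
    · rintro ⟨h1, h2⟩; exact ⟨h2, h1, le_trans h2 htx⟩
  -- key computation of the inner `ρ`-integral
  have key2 : ∀ t : ℝ, 0 < t → t ≤ x → ρ {t} = 0 → ∀ c : ℝ,
      ∫ y in Set.Icc (0:ℝ) x, (Set.Iic t).indicator (fun y => c * k' (t - y)) y ∂ρ = c := by
    intro t ht htx hatom c
    rw [integral_indicator measurableSet_Iic, Measure.restrict_restrict measurableSet_Iic,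
      hint_set t ht.le htx, integral_const_mul, hSonine' t ht hatom, mul_one]
  have key3 : ∀ t : ℝ, 0 < t → t ≤ x → ∀ c : ℝ,
      Integrable ((Set.Iic t).indicator (fun y => c * k' (t - y)))
        (ρ.restrict (Set.Icc 0 x)) := by
    intro t ht htx c
    rw [integrable_indicator_iff measurableSet_Iic, IntegrableOn,
      Measure.restrict_restrict measurableSet_Iic, hint_set t ht.le htx]
    exact (hInt_k' t ht).const_mul c
  -- integrability of `f'` (hence `g`) on `(0, x]`
  have hg_ae' : f' =ᵐ[volume.restrict (Set.Ioc 0 x)] g :=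
    ae_restrict_of_ae_restrict_of_subset (fun z hz => le_of_lt hz.1) hg_ae
  have hgint : IntegrableOn g (Set.Ioc 0 x) volume := by
    have h1 : IntegrableOn f' (Set.Icc 0 x) volume :=
      hf'.integrableOn_compact_subset Set.Icc_subset_Ici_self isCompact_Icc
    exact (h1.mono_set Set.Ioc_subset_Icc_self).congr hg_ae'
  -- Fubini conditions
  have cond1 : ∀ᵐ u ∂(volume : Measure ℝ),
      Integrable (fun y => F (y, u)) (ρ.restrict (Set.Icc 0 x)) := by
    filter_upwards [hne] with u hux
    by_cases hu : 0 < u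
    · by_cases hux2 : u ≤ x
      · have h1 : u < x := lt_of_le_of_ne hux2 hux
        rw [hsecy u hu]
        exact key3 (x - u) (by linarith) (by linarith) (g u)
      · rw [hsecy u hu]
        refine (integrable_zero _ _ _).congr ?_
        filter_upwards [ae_restrict_mem measurableSet_Icc] with y hy
        refine (Set.indicator_of_notMem ?_ _).symm
        simp only [Set.mem_Iic, not_le]
        have := hy.1
        linarith [not_le.mp hux2]
    · have h0 : (fun y => F (y, u)) = fun _ => (0:ℝ) := by
        funext y
        exact Set.indicator_of_notMem (fun hc => hu hc.1) _
      rw [h0]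
      exact integrable_zero _ _ _
  have cond2 : Integrable (fun u => ∫ y, ‖F (y, u)‖ ∂(ρ.restrict (Set.Icc 0 x))) volume := by
    refine Integrable.congr ((integrable_indicator_iff measurableSet_Ioc).mpr hgint.norm) ?_
    filter_upwards [hne, hUae] with u hux hatom
    by_cases hu : 0 < u
    · by_cases hux2 : u ≤ x
      · have h1 : u < x := lt_of_le_of_ne hux2 hux
        rw [Set.indicator_of_mem (Set.mem_Ioc.mpr ⟨hu, hux2⟩), hsecnorm u hu]
        exact (key2 (x - u) (by linarith) (by linarith) hatom ‖g u‖).symm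
      · rw [Set.indicator_of_notMem (by
          simp only [Set.mem_Ioc, not_and, not_le]; intro; linarith [not_le.mp hux2])]
        symm
        apply integral_eq_zero_of_ae
        filter_upwards [ae_restrict_mem measurableSet_Icc] with y hy
        have hmem : (y, u) ∉ S := by
          rintro ⟨-, h2⟩
          have := hy.1
          linarith [not_le.mp hux2]
        simp [hFdef, Set.indicator_of_notMem hmem]
    · rw [Set.indicator_of_notMem (by
        simp only [Set.mem_Ioc, not_and]; intro h; exact absurd h hu)]
      symm
      apply integral_eq_zero_of_ae
      refine ae_of_all _ fun y => ?_
      simp [hFdef, Set.indicator_of_notMem (fun hc => hu hc.1 : (y, u) ∉ S)]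
  have hF_int : Integrable F ((ρ.restrict (Set.Icc 0 x)).prod volume) := by
    rw [integrable_prod_iff' hF_meas.aestronglyMeasurable]
    exact ⟨cond1, cond2⟩
  have hswap : (∫ y, ∫ u, F (y, u) ∂volume ∂(ρ.restrict (Set.Icc 0 x)))
      = ∫ u, ∫ y, F (y, u) ∂(ρ.restrict (Set.Icc 0 x)) ∂volume :=
    integral_integral_swap hF_int
  calc
    ∫ y in Set.Icc (0:ℝ) x, (∫ s in (0:ℝ)..(x - y), f' (x - y - s) * k s) ∂ρ
      = ∫ y in Set.Icc (0:ℝ) x, (∫ u, F (y, u) ∂volume) ∂ρ := by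
        refine setIntegral_congr_fun measurableSet_Icc fun y hy => ?_
        have hxy : (0:ℝ) ≤ x - y := by linarith [hy.2]
        have e0 : (∫ s in (0:ℝ)..(x - y), f' (x - y - s) * k s)
            = ∫ s in (0:ℝ)..(x - y), f' (x - y - s) * k' s := by
          rw [intervalIntegral.integral_of_le hxy, intervalIntegral.integral_of_le hxy]
          refine setIntegral_congr_fun measurableSet_Ioc fun s hs => ?_
          rw [hk'_pos s hs.1]
        have e1 : (∫ s in (0:ℝ)..(x - y), f' (x - y - s) * k' s)
            = ∫ s in (0:ℝ)..(x - y), f' (x - y - s) * k' (x - y - (x - y - s)) := by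
          refine intervalIntegral.integral_congr fun s _ => ?_
          rw [sub_sub_cancel]
        have e2 := intervalIntegral.integral_comp_sub_left (a := (0:ℝ)) (b := x - y)
          (fun u => f' u * k' (x - y - u)) (x - y)
        simp only [sub_self, sub_zero] at e2
        rw [e0, e1, e2, intervalIntegral.integral_of_le hxy]
        have e3 : (∫ u in Set.Ioc (0:ℝ) (x - y), f' u * k' (x - y - u))
            = ∫ u in Set.Ioc (0:ℝ) (x - y), g u * k' (x - y - u) := by
          refine integral_congr_ae ?_
          have hs : f' =ᵐ[volume.restrict (Set.Ioc 0 (x - y))] g :=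
            ae_restrict_of_ae_restrict_of_subset (fun z hz => le_of_lt hz.1) hg_ae
          filter_upwards [hs] with u hu
          rw [hu]
        rw [e3, hsecu y, integral_indicator measurableSet_Ioc]
    _ = ∫ u, ∫ y, F (y, u) ∂(ρ.restrict (Set.Icc 0 x)) ∂volume := hswap
    _ = ∫ u, (Set.Ioc (0:ℝ) x).indicator g u ∂volume := by
        refine integral_congr_ae ?_
        filter_upwards [hne, hUae] with u hux hatom
        by_cases hu : 0 < u
        · by_cases hux2 : u ≤ x
          · have h1 : u < x := lt_of_le_of_ne hux2 hux
            rw [hsecy u hu, Set.indicator_of_mem (Set.mem_Ioc.mpr ⟨hu, hux2⟩)]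
            exact key2 (x - u) (by linarith) (by linarith) hatom (g u)
          · rw [Set.indicator_of_notMem (by
              simp only [Set.mem_Ioc, not_and, not_le]; intro; linarith [not_le.mp hux2])]
            apply integral_eq_zero_of_ae
            filter_upwards [ae_restrict_mem measurableSet_Icc] with y hy
            have hmem : (y, u) ∉ S := by
              rintro ⟨-, h2⟩
              have := hy.1
              linarith [not_le.mp hux2]
            simp [hFdef, Set.indicator_of_notMem hmem]
        · rw [Set.indicator_of_notMem (by
            simp only [Set.mem_Ioc, not_and]; intro h; exact absurd h hu)]
          apply integral_eq_zero_of_ae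
          refine ae_of_all _ fun y => ?_
          simp [hFdef, Set.indicator_of_notMem (fun hc => hu hc.1 : (y, u) ∉ S)]
    _ = ∫ u in Set.Ioc (0:ℝ) x, g u := integral_indicator measurableSet_Ioc
    _ = ∫ u in Set.Ioc (0:ℝ) x, f' u := integral_congr_ae hg_ae'.symm
    _ = ∫ u in (0:ℝ)..x, f' u := (intervalIntegral.integral_of_le hx.le).symm
    _ = f x - f 0 := by rw [hAC x hx.le]; ring
end
end

section
/- Let α ∈ (0,1), c > 1 and let ψ be a self-similar Bernstein function with respect to α and c which is strictly positive on (0,∞). Then the primitive G_I^*(x) := ∫₀^x 1/ψ(y) dy is a self-similar Bernstein function with respect to 1 − α ∈ (0,1) and d := c^{(1−α)/α} > 1; that is, G_I^* is a Bernstein function and G_I^*(d^{1/(1−α)} x) = d · G_I^*(x) for all x > 0. -/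
open MeasureTheory Set Filter Real

noncomputable section

lemma iteratedDeriv_const'' {n : ℕ} (hn : n ≠ 0) (c x : ℝ) :
    iteratedDeriv n (fun _ : ℝ => c) x = 0 := by
  rw [iteratedDeriv_eq_iteratedFDeriv, iteratedFDeriv_const_of_ne hn]
  rfl

lemma iteratedDerivWithin_of_isOpen'' {s : Set ℝ} (hs : IsOpen s) (f : ℝ → ℝ) (n : ℕ)
    {x : ℝ} (hx : x ∈ s) : iteratedDerivWithin n f s x = iteratedDeriv n f x := by
  simp only [iteratedDerivWithin, iteratedDeriv, iteratedFDerivWithin_of_isOpen n hs hx]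

lemma iteratedDeriv_add_of_isOpen {s : Set ℝ} (hs : IsOpen s) {f g : ℝ → ℝ} {n : ℕ}
    (hf : ContDiffOn ℝ n f s) (hg : ContDiffOn ℝ n g s) {x : ℝ} (hx : x ∈ s) :
    iteratedDeriv n (fun y => f y + g y) x = iteratedDeriv n f x + iteratedDeriv n g x := by
  rw [← iteratedDerivWithin_of_isOpen'' hs _ n hx, ← iteratedDerivWithin_of_isOpen'' hs f n hx,
    ← iteratedDerivWithin_of_isOpen'' hs g n hx]
  exact iteratedDerivWithin_add hx hs.uniqueDiffOn (hf x hx) (hg x hx)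

lemma pascal_sum (a b : ℕ → ℝ) (n : ℕ) :
    ∑ k ∈ Finset.range (n+2), ((n+1).choose k : ℝ) * a k * b (n+1-k)
      = ∑ k ∈ Finset.range (n+1), (n.choose k : ℝ) * a (k+1) * b (n-k)
        + ∑ k ∈ Finset.range (n+1), (n.choose k : ℝ) * a k * b (n+1-k) := by
  rw [Finset.sum_range_succ' (fun k => ((n+1).choose k : ℝ) * a k * b (n+1-k)) (n+1)]
  have e1 : ∀ k ∈ Finset.range (n+1),
      ((n+1).choose (k+1) : ℝ) * a (k+1) * b (n+1-(k+1))
        = (n.choose k : ℝ) * a (k+1) * b (n-k) + (n.choose (k+1) : ℝ) * a (k+1) * b (n-k) := by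
    intro k _
    have h1 : n + 1 - (k+1) = n - k := by omega
    rw [h1, Nat.choose_succ_succ]
    push_cast
    ring
  rw [Finset.sum_congr rfl e1, Finset.sum_add_distrib]
  have e2 : ∑ k ∈ Finset.range (n+1), (n.choose (k+1) : ℝ) * a (k+1) * b (n-k)
      + ((n+1).choose 0 : ℝ) * a 0 * b (n+1-0)
      = ∑ k ∈ Finset.range (n+1), (n.choose k : ℝ) * a k * b (n+1-k) := by
    rw [Finset.sum_range_succ' (fun k => (n.choose k : ℝ) * a k * b (n+1-k)) n]
    rw [Finset.sum_range_succ (fun k => (n.choose (k+1) : ℝ) * a (k+1) * b (n-k)) n]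
    simp only [Nat.choose_succ_self, Nat.cast_zero, zero_mul, add_zero, Nat.choose_zero_right,
      Nat.cast_one, Nat.choose_self, Nat.sub_zero]
    congr 1
    apply Finset.sum_congr rfl
    intro k hk
    have h2 : n + 1 - (k+1) = n - k := by omega
    rw [h2]
  linarith [e2]

lemma iteratedDeriv_mul_of_isOpen {s : Set ℝ} (hs : IsOpen s) :
    ∀ (n : ℕ) (f g : ℝ → ℝ), ContDiffOn ℝ (⊤:ℕ∞) f s → ContDiffOn ℝ (⊤:ℕ∞) g s → ∀ x ∈ s,
      iteratedDeriv n (fun y => f y * g y) x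
        = ∑ k ∈ Finset.range (n+1),
            (n.choose k : ℝ) * iteratedDeriv k f x * iteratedDeriv (n-k) g x := by
  intro n
  induction n with
  | zero => intro f g hf hg x hx; simp
  | succ n IH =>
    intro f g hf hg x hx
    have hdf : ContDiffOn ℝ (⊤:ℕ∞) (deriv f) s := hf.deriv_of_isOpen hs (by simp)
    have hdg : ContDiffOn ℝ (⊤:ℕ∞) (deriv g) s := hg.deriv_of_isOpen hs (by simp)
    have hEq : Set.EqOn (deriv (fun y => f y * g y))
        (fun y => (deriv f y * g y) + (f y * deriv g y)) s := by
      intro y hy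
      have hfd : DifferentiableAt ℝ f y :=
        (hf.contDiffAt (hs.mem_nhds hy)).differentiableAt (by simp)
      have hgd : DifferentiableAt ℝ g y :=
        (hg.contDiffAt (hs.mem_nhds hy)).differentiableAt (by simp)
      exact deriv_mul hfd hgd
    rw [iteratedDeriv_succ', hEq.iteratedDeriv_of_isOpen hs n hx,
      iteratedDeriv_add_of_isOpen hs ((hdf.mul hg).of_le (by exact_mod_cast le_top))
        ((hf.mul hdg).of_le (by exact_mod_cast le_top)) hx,
      IH (deriv f) g hdf hg x hx, IH f (deriv g) hf hdg x hx]
    have h1 : ∀ k, iteratedDeriv k (deriv f) x = iteratedDeriv (k+1) f x := by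
      intro k; rw [iteratedDeriv_succ']
    have h2 : ∀ k ∈ Finset.range (n+1),
        (n.choose k : ℝ) * iteratedDeriv k f x * iteratedDeriv (n-k) (deriv g) x
          = (n.choose k : ℝ) * iteratedDeriv k f x * iteratedDeriv (n+1-k) g x := by
      intro k hk
      have hk' : k ≤ n := by simpa using Nat.lt_succ_iff.mp (Finset.mem_range.mp hk)
      rw [show n + 1 - k = (n - k) + 1 by omega, iteratedDeriv_succ']
    rw [Finset.sum_congr rfl h2]
    simp only [h1]
    exact (pascal_sum (fun k => iteratedDeriv k f x) (fun k => iteratedDeriv k g x) n).symm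

lemma cm_inv {ψ : ℝ → ℝ} (hsm : ContDiffOn ℝ (⊤:ℕ∞) ψ (Set.Ioi 0))
    (hsign : ∀ n : ℕ, 0 < n → ∀ x > (0:ℝ), 0 ≤ (-1:ℝ)^(n-1) * iteratedDeriv n ψ x)
    (hpos : ∀ x > (0:ℝ), 0 < ψ x) :
    ∀ n : ℕ, ∀ x > (0:ℝ), 0 ≤ (-1:ℝ)^n * iteratedDeriv n (fun y => (ψ y)⁻¹) x := by
  intro n
  induction n using Nat.strong_induction_on with
  | _ n IH =>
    intro x hx
    match n, IH with
    | 0, _ =>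
      simpa [iteratedDeriv_zero] using (inv_nonneg.mpr (hpos x hx).le)
    | (m+1), IH =>
      have hginv : ContDiffOn ℝ (⊤:ℕ∞) (fun y => (ψ y)⁻¹) (Set.Ioi 0) :=
        hsm.inv (fun y hy => (hpos y hy).ne')
      have hone : Set.EqOn (fun y => (ψ y)⁻¹ * ψ y) (fun _ => (1:ℝ)) (Set.Ioi 0) := by
        intro y hy
        simp [inv_mul_cancel₀ (hpos y hy).ne']
      have hzero : iteratedDeriv (m+1) (fun y => (ψ y)⁻¹ * ψ y) x = 0 := by
        rw [hone.iteratedDeriv_of_isOpen isOpen_Ioi (m+1)]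
        · exact iteratedDeriv_const'' (by omega) 1 x
        · exact hx
      have hsum : ∑ k ∈ Finset.range (m+2), ((m+1).choose k : ℝ) *
          iteratedDeriv k (fun y => (ψ y)⁻¹) x * iteratedDeriv (m+1-k) ψ x = 0 := by
        rw [← iteratedDeriv_mul_of_isOpen isOpen_Ioi (m+1) _ ψ hginv hsm x hx, hzero]
      rw [Finset.sum_range_succ] at hsum
      simp only [Nat.choose_self, Nat.cast_one, one_mul, Nat.sub_self, iteratedDeriv_zero] at hsum
      -- hsum : ∑ k ∈ range (m+1), ... + iteratedDeriv (m+1) g x * ψ x = 0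
      have hkey : 0 ≤ (-1:ℝ)^(m+1) * iteratedDeriv (m+1) (fun y => (ψ y)⁻¹) x * ψ x := by
        have heq : (-1:ℝ)^(m+1) * iteratedDeriv (m+1) (fun y => (ψ y)⁻¹) x * ψ x
            = ∑ k ∈ Finset.range (m+1), (-1:ℝ)^m * (((m+1).choose k : ℝ) *
                iteratedDeriv k (fun y => (ψ y)⁻¹) x * iteratedDeriv (m+1-k) ψ x) := by
          rw [← Finset.mul_sum]
          have : ∑ k ∈ Finset.range (m+1), ((m+1).choose k : ℝ) *
              iteratedDeriv k (fun y => (ψ y)⁻¹) x * iteratedDeriv (m+1-k) ψ x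
              = -(iteratedDeriv (m+1) (fun y => (ψ y)⁻¹) x * ψ x) := by linarith
          rw [this]
          have hpow : (-1:ℝ)^(m+1) = -(-1:ℝ)^m := by rw [pow_succ]; ring
          rw [hpow]; ring
        rw [heq]
        apply Finset.sum_nonneg
        intro k hk
        have hk' : k < m + 1 := Finset.mem_range.mp hk
        have e : (-1:ℝ)^m * (((m+1).choose k : ℝ) *
            iteratedDeriv k (fun y => (ψ y)⁻¹) x * iteratedDeriv (m+1-k) ψ x)
            = ((m+1).choose k : ℝ) * (((-1:ℝ)^k * iteratedDeriv k (fun y => (ψ y)⁻¹) x) *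
              ((-1:ℝ)^(m-k) * iteratedDeriv (m+1-k) ψ x)) := by
          have hpw : (-1:ℝ)^m = (-1:ℝ)^k * (-1:ℝ)^(m-k) := by
            rw [← pow_add]; congr 1; omega
          rw [hpw]; ring
        rw [e]
        have hterm1 : 0 ≤ (-1:ℝ)^k * iteratedDeriv k (fun y => (ψ y)⁻¹) x := IH k hk' x hx
        have hterm2 : 0 ≤ (-1:ℝ)^(m-k) * iteratedDeriv (m+1-k) ψ x := by
          have := hsign (m+1-k) (by omega) x hx
          rwa [show m+1-k-1 = m-k by omega] at this
        positivity
      exact (mul_nonneg_iff_of_pos_right (hpos x hx)).mp hkey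

lemma psi_lower {ψ : ℝ → ℝ} {α c : ℝ} (hα : α ∈ Set.Ioo (0:ℝ) 1) (hc : 1 < c)
    (hmono : MonotoneOn ψ (Set.Ioi 0))
    (hss : ∀ x > (0:ℝ), ψ (c ^ (1/α) * x) = c * ψ x)
    (hpos : ∀ x > (0:ℝ), 0 < ψ x) {x₀ : ℝ} (hx₀ : 0 < x₀) :
    ∀ y, 0 < y → y ≤ x₀ → ψ x₀ * (y / x₀) ^ α / c ≤ ψ y := by
  have hc0 : (0:ℝ) < c := lt_trans one_pos hc
  set K : ℝ := c ^ (1/α) with hK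
  have hK1 : 1 < K := by
    have h1α : 0 < 1/α := by
      have := hα.1; positivity
    rw [hK, Real.one_lt_rpow_iff_of_pos hc0]
    exact Or.inl ⟨hc, h1α⟩
  have hK0 : 0 < K := lt_trans one_pos hK1
  have hKα : K ^ α = c := by
    rw [hK, ← Real.rpow_mul hc0.le, one_div, inv_mul_cancel₀ hα.1.ne', Real.rpow_one]
  have claim : ∀ k : ℕ, ∀ y, 0 < y → x₀ / K^(k+1) ≤ y → y ≤ x₀ →
      ψ x₀ * (y / x₀) ^ α / c ≤ ψ y := by
    intro k
    induction k with
    | zero =>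
      intro y hy0 hy1 hy2
      have h1 : ψ (x₀ / K) ≤ ψ y := by
        apply hmono (Set.mem_Ioi.mpr (by positivity)) (Set.mem_Ioi.mpr hy0) (by simpa using hy1)
      have h2 : ψ (x₀ / K) = ψ x₀ / c := by
        have := hss (x₀ / K) (by positivity)
        rw [mul_div_cancel₀ _ hK0.ne'] at this
        rw [this, mul_div_cancel_left₀ _ hc0.ne']
      have h3 : (y / x₀) ^ α ≤ 1 :=
        Real.rpow_le_one (by positivity) (by rw [div_le_one hx₀]; exact hy2) hα.1.le
      have h4 : 0 ≤ ψ x₀ := (hpos x₀ hx₀).le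
      calc ψ x₀ * (y / x₀) ^ α / c ≤ ψ x₀ * 1 / c := by gcongr
        _ = ψ x₀ / c := by ring
        _ = ψ (x₀ / K) := h2.symm
        _ ≤ ψ y := h1
    | succ k IHk =>
      intro y hy0 hy1 hy2
      rcases le_or_gt (x₀ / K^(k+1)) y with h | h
      · exact IHk y hy0 h hy2
      · have hz0 : 0 < K * y := by positivity
        have hz1 : x₀ / K^(k+1) ≤ K * y := by
          rw [div_le_iff₀ (by positivity)] at hy1 ⊢
          calc x₀ ≤ y * K^(k+2) := hy1
            _ = (K * y) * K^(k+1) := by ring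
        have hz2 : K * y ≤ x₀ := by
          have h6 : K * y < K * (x₀ / K^(k+1)) := by gcongr
          have h7 : K * (x₀ / K^(k+1)) = x₀ / K^k := by
            rw [pow_succ]
            field_simp
          have h8 : x₀ / K^k ≤ x₀ := div_le_self hx₀.le (one_le_pow₀ hK1.le)
          linarith
        have hIH := IHk (K * y) hz0 hz1 hz2
        have hKy : ψ (K * y) = c * ψ y := hss y hy0
        have hrpow : (K * y / x₀) ^ α = c * (y / x₀) ^ α := by
          rw [show K * y / x₀ = K * (y / x₀) by ring,
            Real.mul_rpow hK0.le (by positivity), hKα]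
        rw [hKy, hrpow] at hIH
        -- hIH : ψ x₀ * (c * (y/x₀)^α) / c ≤ c * ψ y
        rw [div_le_iff₀ hc0]
        rw [div_le_iff₀ hc0] at hIH
        nlinarith [hIH]
  intro y hy0 hy2
  obtain ⟨k, hk⟩ := pow_unbounded_of_one_lt (x₀ / y) hK1
  apply claim k y hy0 _ hy2
  rw [div_le_iff₀ (by positivity)]
  rw [div_lt_iff₀ hy0] at hk
  have h5 : K ^ k ≤ K ^ (k+1) := pow_le_pow_right₀ hK1.le (Nat.le_succ k)
  nlinarith [mul_le_mul_of_nonneg_right h5 hy0.le]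

lemma inv_psi_integrable {ψ : ℝ → ℝ} {α c : ℝ} (hα : α ∈ Set.Ioo (0:ℝ) 1) (hc : 1 < c)
    (hcont : ContinuousOn ψ (Set.Ioi 0)) (hmono : MonotoneOn ψ (Set.Ioi 0))
    (hss : ∀ x > (0:ℝ), ψ (c ^ (1/α) * x) = c * ψ x)
    (hpos : ∀ x > (0:ℝ), 0 < ψ x) {x₀ : ℝ} (hx₀ : 0 < x₀) :
    IntervalIntegrable (fun y => 1 / ψ y) volume 0 x₀ := by
  have hc0 : (0:ℝ) < c := lt_trans one_pos hc
  have hψ0 : 0 < ψ x₀ := hpos x₀ hx₀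
  rw [intervalIntegrable_iff_integrableOn_Ioc_of_le hx₀.le]
  set C : ℝ := c * x₀ ^ α / ψ x₀ with hC
  have hC0 : 0 < C := by positivity
  have hbound : ∀ y ∈ Set.Ioc (0:ℝ) x₀, 1 / ψ y ≤ C * y ^ (-α) := by
    intro y hy
    have hy0 : 0 < y := hy.1
    have hL := psi_lower hα hc hmono hss hpos hx₀ y hy0 hy.2
    have hL0 : 0 < ψ x₀ * (y / x₀) ^ α / c := by positivity
    have h1 : 1 / ψ y ≤ 1 / (ψ x₀ * (y / x₀) ^ α / c) :=
      one_div_le_one_div_of_le hL0 hL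
    refine h1.trans (le_of_eq ?_)
    rw [Real.div_rpow hy0.le hx₀.le, Real.rpow_neg hy0.le]
    have hyα : 0 < y ^ α := Real.rpow_pos_of_pos hy0 α
    have hxα : 0 < x₀ ^ α := Real.rpow_pos_of_pos hx₀ α
    field_simp
    rw [hC]
    field_simp
  have hint : IntegrableOn (fun y => C * y ^ (-α)) (Set.Ioc 0 x₀) volume := by
    have := (intervalIntegral.intervalIntegrable_rpow' (a := 0) (b := x₀)
      (r := -α) (by linarith [hα.2])).const_mul C
    rwa [intervalIntegrable_iff_integrableOn_Ioc_of_le hx₀.le] at this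
  refine MeasureTheory.Integrable.mono hint ?_ ?_
  · have : ContinuousOn (fun y => 1 / ψ y) (Set.Ioc 0 x₀) := by
      apply ContinuousOn.div continuousOn_const (hcont.mono Set.Ioc_subset_Ioi_self)
      intro y hy
      exact (hpos y hy.1).ne'
    exact this.aestronglyMeasurable measurableSet_Ioc
  · rw [ae_restrict_iff' measurableSet_Ioc]
    apply Filter.Eventually.of_forall
    intro y hy
    have hy0 : 0 < y := hy.1
    rw [Real.norm_eq_abs, Real.norm_eq_abs, abs_of_pos (one_div_pos.mpr (hpos y hy0)),
      abs_of_pos (mul_pos hC0 (Real.rpow_pos_of_pos hy0 (-α)))]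
    exact hbound y hy

/-- the primitive of `1/ψ` is a self-similar Bernstein function with
respect to `1 − α` and `d = c^((1−α)/α)`. -/
theorem stmt7 (α c : ℝ) (hα : α ∈ Set.Ioo (0:ℝ) 1) (hc : 1 < c) (ψ : ℝ → ℝ)
    (hψ : IsSelfSimilarBernstein ψ α c) (hpos : ∀ x > (0:ℝ), 0 < ψ x) :
    (1 - α) ∈ Set.Ioo (0:ℝ) 1 ∧ 1 < c ^ ((1 - α)/α) ∧
    IsSelfSimilarBernstein (fun x : ℝ => ∫ y in (0:ℝ)..x, 1 / ψ y)
      (1 - α) (c ^ ((1 - α)/α)) := by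
  obtain ⟨⟨hsm, hnn, hsign⟩, hss⟩ := hψ
  obtain ⟨hα0, hα1⟩ := hα
  have hc0 : (0:ℝ) < c := lt_trans one_pos hc
  have h1mα : (0:ℝ) < 1 - α := by linarith
  have hd1 : 1 < c ^ ((1 - α)/α) := by
    rw [Real.one_lt_rpow_iff_of_pos hc0]
    exact Or.inl ⟨hc, by positivity⟩
  set g : ℝ → ℝ := fun y => 1 / ψ y with hg
  set G : ℝ → ℝ := fun x : ℝ => ∫ y in (0:ℝ)..x, 1 / ψ y with hG
  have hgc : ContDiffOn ℝ (⊤:ℕ∞) g (Set.Ioi 0) := by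
    have : ContDiffOn ℝ (⊤:ℕ∞) (fun y => (ψ y)⁻¹) (Set.Ioi 0) :=
      hsm.inv (fun y hy => (hpos y hy).ne')
    simpa [hg, one_div] using this
  have hmono : MonotoneOn ψ (Set.Ioi 0) := by
    apply monotoneOn_of_deriv_nonneg (convex_Ioi 0) hsm.continuousOn
    · intro x hx
      rw [interior_Ioi] at hx
      exact ((hsm.contDiffAt (isOpen_Ioi.mem_nhds hx)).differentiableAt
        (by simp)).differentiableWithinAt
    · intro x hx
      rw [interior_Ioi] at hx
      simpa [iteratedDeriv_one] using hsign 1 one_pos x hx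
  have hInt : ∀ x > (0:ℝ), IntervalIntegrable g volume 0 x := fun x hx =>
    inv_psi_integrable ⟨hα0, hα1⟩ hc hsm.continuousOn hmono hss hpos hx
  have hG' : ∀ x ∈ Set.Ioi (0:ℝ), HasDerivAt G (g x) x := by
    intro x hx
    exact intervalIntegral.integral_hasDerivAt_right (hInt x hx)
      (hgc.continuousOn.stronglyMeasurableAtFilter isOpen_Ioi x hx)
      (hgc.continuousOn.continuousAt (isOpen_Ioi.mem_nhds hx))
  have hEqd : Set.EqOn (deriv G) g (Set.Ioi 0) := fun x hx => (hG' x hx).deriv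
  refine ⟨⟨h1mα, by linarith⟩, hd1, ⟨⟨?_, ?_, ?_⟩, ?_⟩⟩
  · -- smoothness of G
    rw [contDiffOn_infty_iff_deriv_of_isOpen isOpen_Ioi]
    exact ⟨fun x hx => (hG' x hx).differentiableAt.differentiableWithinAt,
      hgc.congr hEqd⟩
  · -- nonnegativity
    intro x hx
    apply intervalIntegral.integral_nonneg_of_ae_restrict hx.le
    rw [Filter.EventuallyLE, ae_restrict_iff' measurableSet_Icc]
    have h0 : (volume : Measure ℝ) {(0:ℝ)} = 0 := measure_singleton 0
    filter_upwards [compl_mem_ae_iff.mpr h0] with y hy0 hy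
    have hy0' : y ≠ 0 := by simpa using hy0
    have : 0 < y := lt_of_le_of_ne hy.1 (Ne.symm hy0')
    have := hpos y this
    simp only [Pi.zero_apply]
    positivity
  · -- sign condition
    intro n hn x hx
    obtain ⟨m, rfl⟩ := Nat.exists_eq_succ_of_ne_zero hn.ne'
    have h1 : iteratedDeriv (m+1) G x = iteratedDeriv m g x := by
      rw [iteratedDeriv_succ']
      exact (hEqd.iteratedDeriv_of_isOpen isOpen_Ioi m) hx
    rw [show m.succ = m + 1 from rfl, h1]
    have := cm_inv hsm hsign hpos m x hx
    have hgeq : g = fun y => (ψ y)⁻¹ := by funext y; simp [hg, one_div]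
    rwa [← hgeq] at this
  · -- self-similarity
    intro x hx
    have hd : (c ^ ((1-α)/α)) ^ ((1:ℝ)/(1-α)) = c ^ (1/α) := by
      rw [← Real.rpow_mul hc0.le]
      congr 1
      field_simp
    have hK0 : (0:ℝ) < c ^ (1/α) := Real.rpow_pos_of_pos hc0 _
    rw [hd]
    simp only [hG]
    have h2 : (∫ y in (0:ℝ)..(c ^ (1/α) * x), 1/ψ y)
        = (c ^ (1/α)) • ∫ y in (0:ℝ)..x, 1/ψ (c ^ (1/α) * y) := by
      have := intervalIntegral.smul_integral_comp_mul_left (a := (0:ℝ)) (b := x)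
        (fun y => 1/ψ y) (c ^ (1/α))
      rw [mul_zero] at this
      exact this.symm
    have h3 : (∫ y in (0:ℝ)..x, 1/ψ (c ^ (1/α) * y))
        = ∫ y in (0:ℝ)..x, (1/c) * (1/ψ y) := by
      apply intervalIntegral.integral_congr_ae
      apply Filter.Eventually.of_forall
      intro y hy
      rw [Set.uIoc_of_le (le_of_lt hx)] at hy
      rw [hss y hy.1]
      rw [one_div, mul_inv]
      ring
    rw [h2, h3, intervalIntegral.integral_const_mul, smul_eq_mul, ← mul_assoc]
    congr 1
    have hinv : (1:ℝ)/c = c ^ (-1:ℝ) := by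
      rw [Real.rpow_neg_one, one_div]
    rw [hinv, ← Real.rpow_add hc0]
    congr 1
    field_simp
    ring
end
end

section
/- Let α ∈ (0,1), d > 1, let σ be a continuously differentiable admissable function with respect to 1 − α and d, and let μ be the Borel measure on (0,∞) with μ((t,∞)) = t^{α−1} σ(log t) for all t > 0. Define G_I^*(x) = ∫₀^∞ (1 − e^{−xt}) dμ(t) for x > 0. Then the kernel k^*(t) := t^{α−1}((1 − α) σ(log t) − σ′(log t)) is non-negative for all t > 0, and the derivative of G_I^* satisfies (G_I^*)′(x) = ∫₀^∞ e^{−xt} k^*(t) dt for all x > 0. -/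
open MeasureTheory Set Filter Real Topology
open scoped ENNReal

noncomputable section

namespace Stmt8Aux

lemma nonpos_of_antitoneOn {f : ℝ → ℝ} {c s : ℝ} (hs : 0 < s)
    (hf : AntitoneOn f (Set.Ioi 0)) (hd : HasDerivAt f c s) : c ≤ 0 := by
  have h := hasDerivAt_iff_tendsto_slope.mp hd
  have h2 : Tendsto (slope f s) (𝓝[>] s) (𝓝 c) :=
    h.mono_left (nhdsWithin_mono _ fun y hy => ne_of_gt hy)
  refine le_of_tendsto h2 ?_
  filter_upwards [self_mem_nhdsWithin] with y hy
  have hy' : s < y := hy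
  have h3 : f y ≤ f s := hf (mem_Ioi.mpr hs) (mem_Ioi.mpr (hs.trans hy')) hy'.le
  have h4 := div_nonpos_of_nonpos_of_nonneg (sub_nonpos.mpr h3) (sub_nonneg.mpr hy'.le)
  rw [slope_def_field]
  exact h4

lemma hasDerivAt_tail {α : ℝ} (σ : ℝ → ℝ) (hσC1 : ContDiff ℝ 1 σ) {s : ℝ} (hs : 0 < s) :
    HasDerivAt (fun t : ℝ => t ^ (α - 1) * σ (Real.log t))
      (s ^ (α - 2) * ((α - 1) * σ (Real.log s) + deriv σ (Real.log s))) s := by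
  have h1 : HasDerivAt (fun t : ℝ => t ^ (α - 1)) ((α - 1) * s ^ (α - 1 - 1)) s :=
    Real.hasDerivAt_rpow_const (Or.inl hs.ne')
  have h2 : HasDerivAt (fun t : ℝ => σ (Real.log t)) (deriv σ (Real.log s) * s⁻¹) s :=
    ((hσC1.differentiable one_ne_zero s.log).hasDerivAt).comp s (Real.hasDerivAt_log hs.ne')
  have h := h1.mul h2
  refine h.congr_deriv ?_
  have e0 : α - 1 - 1 = α - 2 := by ring
  have e2 : s ^ (α - 1) * s⁻¹ = s ^ (α - 2) := by
    rw [← Real.rpow_neg_one s, ← Real.rpow_add hs]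
    congr 1
  rw [e0] at h1 ⊢
  rw [← e2]
  ring

lemma integrableOn_rpow_exp {c r : ℝ} (hc : 0 < c) (hr : -1 < r) :
    IntegrableOn (fun s : ℝ => s ^ r * Real.exp (-(c * s))) (Set.Ioi 0) := by
  have h0 : IntegrableOn (fun y : ℝ => Real.exp (-y) * y ^ (r + 1 - 1)) (Set.Ioi 0) :=
    Real.GammaIntegral_convergent (by linarith)
  have h1 : IntegrableOn (fun s : ℝ => Real.exp (-(c * s)) * (c * s) ^ (r + 1 - 1))
      (Set.Ioi 0) := by
    have := (integrableOn_Ioi_comp_mul_left_iff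
      (fun y : ℝ => Real.exp (-y) * y ^ (r + 1 - 1)) 0 hc).mpr (by simpa using h0)
    simpa using this
  have h2 : IntegrableOn (fun s : ℝ => c ^ (-r) * (Real.exp (-(c * s)) * (c * s) ^ (r + 1 - 1)))
      (Set.Ioi 0) := h1.const_mul (c ^ (-r))
  refine h2.congr_fun ?_ measurableSet_Ioi
  intro s hs
  have hs' : (0:ℝ) < s := hs
  have e1 : (c * s) ^ (r + 1 - 1) = c ^ r * s ^ r := by
    rw [show r + 1 - 1 = r by ring, Real.mul_rpow hc.le hs'.le]
  have e2 : c ^ (-r) * c ^ r = 1 := by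
    rw [← Real.rpow_add hc]; simp
  calc c ^ (-r) * (Real.exp (-(c * s)) * (c * s) ^ (r + 1 - 1))
      = (c ^ (-r) * c ^ r) * (s ^ r * Real.exp (-(c * s))) := by rw [e1]; ring
    _ = s ^ r * Real.exp (-(c * s)) := by rw [e2, one_mul]

lemma sigmaFinite_of_tail (μ : Measure ℝ) (hμ0 : μ (Set.Iic 0) = 0)
    (hfin : ∀ t > (0:ℝ), μ (Set.Ioi t) < ⊤) : SigmaFinite μ := by
  refine ⟨⟨⟨fun n => Set.Iic 0 ∪ Set.Ioi (1/(n+1) : ℝ), fun _ => trivial, fun n => ?_, ?_⟩⟩⟩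
  · refine lt_of_le_of_lt (measure_union_le _ _) ?_
    rw [hμ0, zero_add]
    exact hfin _ (by positivity)
  · ext x
    simp only [Set.mem_iUnion, Set.mem_union, Set.mem_Iic, Set.mem_Ioi, Set.mem_univ, iff_true]
    rcases le_or_gt x 0 with hx | hx
    · exact ⟨0, Or.inl hx⟩
    · obtain ⟨n, hn⟩ := exists_nat_one_div_lt hx
      exact ⟨n, Or.inr hn⟩

lemma tonelli_tail (μ : Measure ℝ) [SFinite μ] {h : ℝ → ℝ≥0∞} (hh : Measurable h) :
    ∫⁻ t, (∫⁻ s in Set.Ioo 0 t, h s) ∂μ = ∫⁻ s in Set.Ioi 0, h s * μ (Set.Ioi s) := by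
  set S : Set (ℝ × ℝ) := {p : ℝ × ℝ | 0 < p.2 ∧ p.2 < p.1} with hS
  have hSm : MeasurableSet S :=
    (measurableSet_lt measurable_const measurable_snd).inter
      (measurableSet_lt measurable_snd measurable_fst)
  set F : ℝ → ℝ → ℝ≥0∞ := fun t s => S.indicator (fun p => h p.2) (t, s) with hF
  have hFm : Measurable (Function.uncurry F) := by
    have : Function.uncurry F = S.indicator (fun p => h p.2) := by
      ext p; cases p; rfl
    rw [this]
    exact (hh.comp measurable_snd).indicator hSm
  have key : ∀ t s : ℝ, F t s = (Set.Ioo 0 t).indicator h s := by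
    intro t s
    show S.indicator (fun p => h p.2) (t, s) = _
    by_cases hs : s ∈ Set.Ioo 0 t
    · have h1 : (t, s) ∈ S := ⟨hs.1, hs.2⟩
      rw [Set.indicator_of_mem h1, Set.indicator_of_mem hs]
    · have h1 : (t, s) ∉ S := fun hm => hs ⟨hm.1, hm.2⟩
      rw [Set.indicator_of_notMem h1, Set.indicator_of_notMem hs]
  have key2 : ∀ s t : ℝ, F t s = (Set.Ioi (0:ℝ)).indicator
      (fun s' => (Set.Ioi s').indicator (fun _ => h s') t) s := by
    intro s t
    show S.indicator (fun p => h p.2) (t, s) = _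
    by_cases hs : (0:ℝ) < s
    · rw [Set.indicator_of_mem (Set.mem_Ioi.mpr hs)]
      by_cases ht : s < t
      · have h1 : (t, s) ∈ S := ⟨hs, ht⟩
        rw [Set.indicator_of_mem h1, Set.indicator_of_mem (Set.mem_Ioi.mpr ht)]
      · have h1 : (t, s) ∉ S := fun hm => ht hm.2
        rw [Set.indicator_of_notMem h1,
          Set.indicator_of_notMem (fun hm => ht (Set.mem_Ioi.mp hm))]
    · have h1 : (t, s) ∉ S := fun hm => hs hm.1
      rw [Set.indicator_of_notMem h1,
        Set.indicator_of_notMem (fun hm => hs (Set.mem_Ioi.mp hm))]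
  have swap := lintegral_lintegral_swap (μ := μ) (ν := volume) hFm.aemeasurable
  calc ∫⁻ t, (∫⁻ s in Set.Ioo 0 t, h s) ∂μ = ∫⁻ t, (∫⁻ s, F t s) ∂μ := by
        refine lintegral_congr fun t => ?_
        rw [← lintegral_indicator measurableSet_Ioo]
        exact lintegral_congr fun s => (key t s).symm
    _ = ∫⁻ s, ∫⁻ t, F t s ∂μ := swap
    _ = ∫⁻ s, (Set.Ioi (0:ℝ)).indicator (fun s' => h s' * μ (Set.Ioi s')) s := by
        refine lintegral_congr fun s => ?_
        simp only [key2 s]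
        by_cases hs : (0:ℝ) < s
        · simp only [Set.indicator_of_mem (Set.mem_Ioi.mpr hs)]
          rw [lintegral_indicator_const measurableSet_Ioi]
        · simp only [Set.indicator_of_notMem (fun hm => hs (Set.mem_Ioi.mp hm))]
          exact lintegral_zero
    _ = ∫⁻ s in Set.Ioi 0, h s * μ (Set.Ioi s) := lintegral_indicator measurableSet_Ioi _

lemma periodic_bound {g : ℝ → ℝ} {c : ℝ} (hc : c ≠ 0) (hg : Continuous g)
    (hp : Function.Periodic g c) : ∃ M : ℝ, 0 < M ∧ ∀ x, |g x| ≤ M := by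
  obtain ⟨R, hR⟩ := (hp.isBounded_of_continuous hc hg).subset_closedBall 0
  refine ⟨max R 1, lt_of_lt_of_le one_pos (le_max_right _ _), fun x => ?_⟩
  have h := hR (Set.mem_range_self x)
  simp only [Metric.mem_closedBall, Real.dist_eq, sub_zero] at h
  exact le_trans h (le_max_left _ _)

lemma hasDerivAt_one_sub_exp (t y : ℝ) :
    HasDerivAt (fun x : ℝ => 1 - Real.exp (-(x * t))) (t * Real.exp (-(y * t))) y := by
  have h1 : HasDerivAt (fun x : ℝ => -(x * t)) (-t) y := by
    exact (((hasDerivAt_id y).mul_const t).neg).congr_deriv (by ring)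
  have h2 := (Real.hasDerivAt_exp (-(y * t))).comp y h1
  have h3 := h2.const_sub 1
  exact h3.congr_deriv (by ring)

lemma interval_exp₁ {c : ℝ} (t : ℝ) :
    ∫ s in (0:ℝ)..t, c * Real.exp (-(c * s)) = 1 - Real.exp (-(c * t)) := by
  have hd : ∀ s ∈ Set.uIcc (0:ℝ) t,
      HasDerivAt (fun u : ℝ => -Real.exp (-(c * u))) (c * Real.exp (-(c * s))) s := by
    intro s _
    have h1 : HasDerivAt (fun u : ℝ => -(c * u)) (-c) s := by
      exact (((hasDerivAt_id s).const_mul c).neg).congr_deriv (by ring)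
    have h2 := ((Real.hasDerivAt_exp (-(c * s))).comp s h1).neg
    exact h2.congr_deriv (by ring)
  have hint : IntervalIntegrable (fun s : ℝ => c * Real.exp (-(c * s))) volume 0 t :=
    (by continuity : Continuous fun s : ℝ => c * Real.exp (-(c * s))).intervalIntegrable 0 t
  rw [intervalIntegral.integral_eq_sub_of_hasDerivAt hd hint]
  simp; ring

lemma interval_exp₂ (c t : ℝ) :
    ∫ s in (0:ℝ)..t, (Real.exp (-(c * s)) - c * s * Real.exp (-(c * s)))
      = t * Real.exp (-(c * t)) := by
  have hd : ∀ s ∈ Set.uIcc (0:ℝ) t,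
      HasDerivAt (fun u : ℝ => u * Real.exp (-(c * u)))
        (Real.exp (-(c * s)) - c * s * Real.exp (-(c * s))) s := by
    intro s _
    have h1 : HasDerivAt (fun u : ℝ => -(c * u)) (-c) s := by
      exact (((hasDerivAt_id s).const_mul c).neg).congr_deriv (by ring)
    have h2 := (Real.hasDerivAt_exp (-(c * s))).comp s h1
    have h3 := (hasDerivAt_id s).mul h2
    exact h3.congr_deriv (by simp only [Function.comp, id_eq, one_mul]; ring)
  have hint : IntervalIntegrable
      (fun s : ℝ => Real.exp (-(c * s)) - c * s * Real.exp (-(c * s))) volume 0 t :=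
    (by continuity : Continuous fun s : ℝ =>
      Real.exp (-(c * s)) - c * s * Real.exp (-(c * s))).intervalIntegrable 0 t
  rw [intervalIntegral.integral_eq_sub_of_hasDerivAt hd hint]
  simp

lemma mul_exp_neg_le (u : ℝ) : u * Real.exp (-u) ≤ 1 - Real.exp (-u) := by
  have h1 := Real.add_one_le_exp u
  have h2 : Real.exp (-u) = (Real.exp u)⁻¹ := Real.exp_neg u
  have h3 : 0 < Real.exp u := Real.exp_pos u
  have h4 : 0 < (Real.exp u)⁻¹ := inv_pos.mpr h3
  have h5 : Real.exp u * (Real.exp u)⁻¹ = 1 := mul_inv_cancel₀ h3.ne'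
  have h6 := mul_le_mul_of_nonneg_right h1 h4.le
  rw [h2]
  nlinarith

end Stmt8Aux

open Stmt8Aux in
/-- the Sonine kernel `k*(t) = t^(α−1)((1−α)σ(log t) − σ'(log t))` is
non-negative and `(G_I^*)' (x) = ∫₀^∞ e^(−xt) k*(t) dt`. -/
theorem stmt8 (α d : ℝ) (hα : α ∈ Set.Ioo (0:ℝ) 1) (hd : 1 < d) (σ : ℝ → ℝ)
    (hσC1 : ContDiff ℝ 1 σ) (hσ : IsAdmissable σ (1 - α) d)
    (μ : MeasureTheory.Measure ℝ)
    (hμ : μ (Set.Iic 0) = 0)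
    (hμtail : ∀ t > (0:ℝ), μ (Set.Ioi t) = ENNReal.ofReal (t ^ (α - 1) * σ (Real.log t))) :
    (∀ t > (0:ℝ),
      0 ≤ t ^ (α - 1) * ((1 - α) * σ (Real.log t) - deriv σ (Real.log t))) ∧
    ∀ x > (0:ℝ),
      deriv (fun x : ℝ => ∫ t in Set.Ioi (0:ℝ), (1 - Real.exp (-(x * t))) ∂μ) x
        = ∫ t in Set.Ioi (0:ℝ), Real.exp (-(x * t)) *
            (t ^ (α - 1) * ((1 - α) * σ (Real.log t) - deriv σ (Real.log t))) := by
  obtain ⟨hα0, hα1⟩ := hα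
  obtain ⟨hσpos, hσanti', hσper⟩ := hσ
  have hanti : AntitoneOn (fun t : ℝ => t ^ (α - 1) * σ (Real.log t)) (Set.Ioi 0) := by
    have e : -(1 - α) = α - 1 := by ring
    simpa [e] using hσanti'
  -- Part 1 : nonnegativity of the kernel
  have hk : ∀ t > (0:ℝ),
      0 ≤ t ^ (α - 1) * ((1 - α) * σ (Real.log t) - deriv σ (Real.log t)) := by
    intro t ht
    have hle := nonpos_of_antitoneOn ht hanti (hasDerivAt_tail σ hσC1 ht)
    have hpow : (0:ℝ) < t ^ (α - 2) := Real.rpow_pos_of_pos ht _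
    have h3 : (α - 1) * σ (Real.log t) + deriv σ (Real.log t) ≤ 0 := by
      by_contra hcon
      push_neg at hcon
      nlinarith
    have h4 : 0 ≤ (1 - α) * σ (Real.log t) - deriv σ (Real.log t) := by linarith
    exact mul_nonneg (Real.rpow_pos_of_pos ht _).le h4
  refine ⟨hk, ?_⟩
  intro x hx
  -- basic setup
  haveI : SigmaFinite μ := sigmaFinite_of_tail μ hμ fun t ht => by
    rw [hμtail t ht]; exact ENNReal.ofReal_lt_top
  have hae : ∀ᵐ t ∂μ, t ∈ Set.Ioi (0:ℝ) := by
    rw [ae_iff]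
    have he : {t : ℝ | ¬ t ∈ Set.Ioi (0:ℝ)} = Set.Iic 0 := by ext t; simp [not_lt]
    rw [he]; exact hμ
  have hres : μ.restrict (Set.Ioi 0) = μ := Measure.restrict_eq_self_of_ae_mem hae
  have hce : ∀ c : ℝ, Continuous fun s : ℝ => Real.exp (-(c * s)) := fun c =>
    Real.continuous_exp.comp ((continuous_const.mul continuous_id).neg)
  -- bounds on σ and deriv σ
  have hdpos : (0:ℝ) < d := lt_trans one_pos hd
  have hc₀ : Real.log (d ^ (1/(1-α))) ≠ 0 := by
    have h1 : 1 < d ^ (1/(1-α)) := by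
      rw [Real.one_lt_rpow_iff_of_pos hdpos]
      left
      refine ⟨hd, ?_⟩
      have h2 : (0:ℝ) < 1 - α := by linarith
      positivity
    exact ne_of_gt (Real.log_pos h1)
  have hσ'per : Function.Periodic (deriv σ) (Real.log (d ^ (1/(1-α)))) := by
    intro y
    have he : (fun z => σ (z + Real.log (d ^ (1/(1-α))))) = σ := funext fun z => hσper z
    rw [← deriv_comp_add_const, he]
  obtain ⟨M₁, hM₁pos, hM₁⟩ := periodic_bound hc₀ hσC1.continuous hσper
  obtain ⟨M₂, hM₂pos, hM₂⟩ := periodic_bound hc₀ (hσC1.continuous_deriv le_rfl) hσ'per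
  set M := M₁ + M₂ with hMdef
  have hMpos : 0 < M := by rw [hMdef]; linarith
  have hMa : ∀ y, |σ y| ≤ M := fun y =>
    le_trans (hM₁ y) (by simp only [hMdef]; linarith)
  have hMb : ∀ y, |deriv σ y| ≤ M := fun y =>
    le_trans (hM₂ y) (by simp only [hMdef]; linarith)
  -- continuity of the tail function and the kernel on (0,∞)
  have hfc : ContinuousOn (fun s : ℝ => s ^ (α - 1) * σ (Real.log s)) (Set.Ioi 0) := by
    intro s hs
    have hs' : (0:ℝ) < s := hs
    exact ((Real.continuousAt_rpow_const s (α-1) (Or.inl hs'.ne')).mul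
      ((hσC1.continuous.continuousAt).comp (Real.continuousAt_log hs'.ne'))).continuousWithinAt
  have hkc : ContinuousOn (fun s : ℝ =>
      s ^ (α - 1) * ((1 - α) * σ (Real.log s) - deriv σ (Real.log s))) (Set.Ioi 0) := by
    intro s hs
    have hs' : (0:ℝ) < s := hs
    have hcl : ContinuousAt (fun u : ℝ => (1 - α) * σ (Real.log u) - deriv σ (Real.log u)) s :=
      (((hσC1.continuous.continuousAt).comp (Real.continuousAt_log hs'.ne')).const_mul
        (1-α)).sub (((hσC1.continuous_deriv le_rfl).continuousAt).comp
          (Real.continuousAt_log hs'.ne'))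
    exact ((Real.continuousAt_rpow_const s (α-1) (Or.inl hs'.ne')).mul hcl).continuousWithinAt
  -- integrability on (0,∞) w.r.t. Lebesgue
  have hIf : ∀ c : ℝ, 0 < c → IntegrableOn
      (fun s : ℝ => Real.exp (-(c * s)) * (s ^ (α - 1) * σ (Real.log s))) (Set.Ioi 0) := by
    intro c hc
    have base : IntegrableOn (fun s : ℝ => M * (s ^ (α - 1) * Real.exp (-(c * s))))
        (Set.Ioi 0) := (integrableOn_rpow_exp hc (by linarith)).const_mul M
    refine base.mono' ?_ ?_
    · exact ((hce c).continuousOn.mul hfc).aestronglyMeasurable measurableSet_Ioi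
    · rw [ae_restrict_iff' measurableSet_Ioi]
      refine ae_of_all _ fun s hs => ?_
      have hs' : (0:ℝ) < s := hs
      have hre : ‖Real.exp (-(c * s)) * (s ^ (α - 1) * σ (Real.log s))‖
          = Real.exp (-(c * s)) * (s ^ (α - 1) * |σ (Real.log s)|) := by
        rw [Real.norm_eq_abs, abs_mul (Real.exp (-(c * s))), abs_mul (s ^ (α - 1)),
          abs_of_pos (Real.exp_pos _), abs_of_pos (Real.rpow_pos_of_pos hs' _)]
      rw [hre]
      calc Real.exp (-(c*s)) * (s ^ (α-1) * |σ (Real.log s)|)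
          ≤ Real.exp (-(c*s)) * (s ^ (α-1) * M) := by
            refine mul_le_mul_of_nonneg_left ?_ (Real.exp_pos _).le
            exact mul_le_mul_of_nonneg_left (hMa _) (Real.rpow_pos_of_pos hs' _).le
        _ = M * (s ^ (α-1) * Real.exp (-(c*s))) := by ring
  have hIsf : ∀ c : ℝ, 0 < c → IntegrableOn
      (fun s : ℝ => (c * s * Real.exp (-(c * s))) * (s ^ (α - 1) * σ (Real.log s)))
      (Set.Ioi 0) := by
    intro c hc
    have base : IntegrableOn (fun s : ℝ => (c * M) * (s ^ α * Real.exp (-(c * s))))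
        (Set.Ioi 0) := (integrableOn_rpow_exp hc (by linarith)).const_mul (c * M)
    refine base.mono' ?_ ?_
    · exact (((continuous_const.mul continuous_id).mul (hce c)).continuousOn.mul
        hfc).aestronglyMeasurable measurableSet_Ioi
    · rw [ae_restrict_iff' measurableSet_Ioi]
      refine ae_of_all _ fun s hs => ?_
      have hs' : (0:ℝ) < s := hs
      have hss : s ^ α = s * s ^ (α - 1) := by
        have h := Real.rpow_add hs' 1 (α - 1)
        rw [Real.rpow_one] at h
        rw [show (1:ℝ) + (α - 1) = α by ring] at h
        exact h
      have hcse : (0:ℝ) < c * s * Real.exp (-(c * s)) :=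
        mul_pos (mul_pos hc hs') (Real.exp_pos _)
      have hre : ‖(c * s * Real.exp (-(c * s))) * (s ^ (α - 1) * σ (Real.log s))‖
          = (c * s * Real.exp (-(c * s))) * (s ^ (α - 1) * |σ (Real.log s)|) := by
        rw [Real.norm_eq_abs, abs_mul (c * s * Real.exp (-(c * s))), abs_mul (s ^ (α - 1)),
          abs_of_pos hcse, abs_of_pos (Real.rpow_pos_of_pos hs' _)]
      rw [hre]
      calc (c * s * Real.exp (-(c*s))) * (s ^ (α-1) * |σ (Real.log s)|)
          ≤ (c * s * Real.exp (-(c*s))) * (s ^ (α-1) * M) := by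
            refine mul_le_mul_of_nonneg_left ?_ hcse.le
            exact mul_le_mul_of_nonneg_left (hMa _) (Real.rpow_pos_of_pos hs' _).le
        _ = (c * M) * (s ^ α * Real.exp (-(c*s))) := by rw [hss]; ring
  have hIk : IntegrableOn (fun s : ℝ => Real.exp (-(x * s)) *
      (s ^ (α - 1) * ((1 - α) * σ (Real.log s) - deriv σ (Real.log s)))) (Set.Ioi 0) := by
    have base : IntegrableOn (fun s : ℝ => (2*M) * (s ^ (α - 1) * Real.exp (-(x * s))))
        (Set.Ioi 0) := (integrableOn_rpow_exp hx (by linarith)).const_mul (2*M)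
    refine base.mono' ?_ ?_
    · exact ((hce x).continuousOn.mul hkc).aestronglyMeasurable measurableSet_Ioi
    · rw [ae_restrict_iff' measurableSet_Ioi]
      refine ae_of_all _ fun s hs => ?_
      have hs' : (0:ℝ) < s := hs
      have habs : |(1-α) * σ (Real.log s) - deriv σ (Real.log s)| ≤ 2 * M := by
        have h1 := abs_sub ((1-α) * σ (Real.log s)) (deriv σ (Real.log s))
        have h2 : |(1-α) * σ (Real.log s)| = (1-α) * |σ (Real.log s)| := by
          rw [abs_mul, abs_of_pos (by linarith : (0:ℝ) < 1 - α)]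
        have h3 := hMa (Real.log s)
        have h4 := hMb (Real.log s)
        have h5 : (0:ℝ) ≤ |σ (Real.log s)| := abs_nonneg _
        nlinarith
      have hre : ‖Real.exp (-(x * s)) * (s ^ (α - 1) *
          ((1-α) * σ (Real.log s) - deriv σ (Real.log s)))‖
          = Real.exp (-(x * s)) * (s ^ (α - 1) *
            |(1-α) * σ (Real.log s) - deriv σ (Real.log s)|) := by
        rw [Real.norm_eq_abs, abs_mul (Real.exp (-(x * s))), abs_mul (s ^ (α - 1)),
          abs_of_pos (Real.exp_pos _), abs_of_pos (Real.rpow_pos_of_pos hs' _)]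
      rw [hre]
      calc Real.exp (-(x*s)) * (s ^ (α-1) * |(1-α) * σ (Real.log s) - deriv σ (Real.log s)|)
          ≤ Real.exp (-(x*s)) * (s ^ (α-1) * (2*M)) := by
            refine mul_le_mul_of_nonneg_left ?_ (Real.exp_pos _).le
            exact mul_le_mul_of_nonneg_left habs (Real.rpow_pos_of_pos hs' _).le
        _ = (2*M) * (s ^ (α-1) * Real.exp (-(x*s))) := by ring
  -- Tonelli-type identity specialized to our measure
  have hTon : ∀ g : ℝ → ℝ, Continuous g → (∀ s : ℝ, 0 < s → 0 ≤ g s) →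
      IntegrableOn (fun s => g s * (s ^ (α - 1) * σ (Real.log s))) (Set.Ioi 0) →
      ∫⁻ t, (∫⁻ s in Set.Ioo 0 t, ENNReal.ofReal (g s)) ∂μ
        = ENNReal.ofReal (∫ s in Set.Ioi 0, g s * (s ^ (α - 1) * σ (Real.log s))) := by
    intro g hg hg0 hint
    rw [tonelli_tail μ hg.measurable.ennreal_ofReal]
    have hcongr : ∀ s : ℝ, s ∈ Set.Ioi (0:ℝ) → ENNReal.ofReal (g s) * μ (Set.Ioi s)
        = ENNReal.ofReal (g s * (s ^ (α - 1) * σ (Real.log s))) := by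
      intro s hs
      have hs' : (0:ℝ) < s := hs
      rw [hμtail s hs', ← ENNReal.ofReal_mul (hg0 s hs')]
    rw [setLIntegral_congr_fun measurableSet_Ioi hcongr]
    refine (ofReal_integral_eq_lintegral_ofReal hint
      ((ae_restrict_iff' measurableSet_Ioi).mpr (ae_of_all _ fun s hs => ?_))).symm
    have hs' : (0:ℝ) < s := hs
    exact mul_nonneg (hg0 s hs') (mul_nonneg (Real.rpow_pos_of_pos hs' _).le (hσpos _).le)
  -- pointwise lintegral computations
  have key1 : ∀ c : ℝ, 0 < c → ∀ t : ℝ, 0 < t →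
      ENNReal.ofReal (1 - Real.exp (-(c * t)))
        = ∫⁻ s in Set.Ioo 0 t, ENNReal.ofReal (c * Real.exp (-(c * s))) := by
    intro c hc t ht
    have hcont : Continuous fun s : ℝ => c * Real.exp (-(c * s)) :=
      continuous_const.mul (hce c)
    have hint : IntegrableOn (fun s : ℝ => c * Real.exp (-(c * s))) (Set.Ioo 0 t) :=
      (intervalIntegrable_iff_integrableOn_Ioo_of_le ht.le).mp (hcont.intervalIntegrable 0 t)
    rw [← ofReal_integral_eq_lintegral_ofReal hint
      (ae_of_all _ fun s => le_of_lt (mul_pos hc (Real.exp_pos _)))]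
    congr 1
    rw [← MeasureTheory.integral_Ioc_eq_integral_Ioo, ← intervalIntegral.integral_of_le ht.le]
    exact (interval_exp₁ t).symm
  have key2 : ∀ t : ℝ, 0 < t →
      ENNReal.ofReal (t * Real.exp (-(x * t)))
        + (∫⁻ s in Set.Ioo 0 t, ENNReal.ofReal (x * s * Real.exp (-(x * s))))
        = ∫⁻ s in Set.Ioo 0 t, ENNReal.ofReal (Real.exp (-(x * s))) := by
    intro t ht
    have hcont1 : Continuous fun s : ℝ => x * s * Real.exp (-(x * s)) :=
      (continuous_const.mul continuous_id).mul (hce x)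
    have hint1 : IntegrableOn (fun s : ℝ => x * s * Real.exp (-(x * s))) (Set.Ioo 0 t) :=
      (intervalIntegrable_iff_integrableOn_Ioo_of_le ht.le).mp (hcont1.intervalIntegrable 0 t)
    have hint2 : IntegrableOn (fun s : ℝ => Real.exp (-(x * s))) (Set.Ioo 0 t) :=
      (intervalIntegrable_iff_integrableOn_Ioo_of_le ht.le).mp ((hce x).intervalIntegrable 0 t)
    rw [← ofReal_integral_eq_lintegral_ofReal hint1
        ((ae_restrict_iff' measurableSet_Ioo).mpr (ae_of_all _ fun s hs =>
          le_of_lt (mul_pos (mul_pos hx hs.1) (Real.exp_pos _)))),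
      ← ofReal_integral_eq_lintegral_ofReal hint2
        (ae_of_all _ fun s => (Real.exp_pos _).le),
      ← ENNReal.ofReal_add (le_of_lt (mul_pos ht (Real.exp_pos _)))
        (setIntegral_nonneg measurableSet_Ioo fun s hs =>
          le_of_lt (mul_pos (mul_pos hx hs.1) (Real.exp_pos _)))]
    congr 1
    have hsub : ∫ s in Set.Ioo 0 t, (Real.exp (-(x*s)) - x * s * Real.exp (-(x*s)))
        = t * Real.exp (-(x*t)) := by
      rw [← MeasureTheory.integral_Ioc_eq_integral_Ioo, ← intervalIntegral.integral_of_le ht.le]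
      exact interval_exp₂ x t
    rw [integral_sub hint2 hint1] at hsub
    linarith
  -- nonnegativity of the two Lebesgue integrals
  have hAnn : 0 ≤ ∫ s in Set.Ioi 0, Real.exp (-(x * s)) * (s ^ (α - 1) * σ (Real.log s)) :=
    setIntegral_nonneg measurableSet_Ioi fun s hs =>
      mul_nonneg (Real.exp_pos _).le
        (mul_nonneg (Real.rpow_pos_of_pos hs _).le (hσpos _).le)
  have hBnn : 0 ≤ ∫ s in Set.Ioi 0,
      (x * s * Real.exp (-(x * s))) * (s ^ (α - 1) * σ (Real.log s)) :=
    setIntegral_nonneg measurableSet_Ioi fun s hs =>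
      mul_nonneg (le_of_lt (mul_pos (mul_pos hx hs) (Real.exp_pos _)))
        (mul_nonneg (Real.rpow_pos_of_pos hs _).le (hσpos _).le)
  have hmeas_te : Measurable fun t : ℝ => ENNReal.ofReal (t * Real.exp (-(x * t))) :=
    ((continuous_id.mul (hce x)).measurable).ennreal_ofReal
  -- the key balance identity
  have hsum : (∫⁻ t, ENNReal.ofReal (t * Real.exp (-(x * t))) ∂μ)
      + ENNReal.ofReal (∫ s in Set.Ioi 0,
          (x * s * Real.exp (-(x * s))) * (s ^ (α - 1) * σ (Real.log s)))
      = ENNReal.ofReal (∫ s in Set.Ioi 0,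
          Real.exp (-(x * s)) * (s ^ (α - 1) * σ (Real.log s))) := by
    have hTB := hTon (fun s => x * s * Real.exp (-(x * s)))
      ((continuous_const.mul continuous_id).mul (hce x))
      (fun s hs => le_of_lt (mul_pos (mul_pos hx hs) (Real.exp_pos _))) (hIsf x hx)
    have hTA := hTon (fun s => Real.exp (-(x * s))) (hce x)
      (fun s _ => (Real.exp_pos _).le) (hIf x hx)
    calc (∫⁻ t, ENNReal.ofReal (t * Real.exp (-(x * t))) ∂μ)
        + ENNReal.ofReal (∫ s in Set.Ioi 0,
            (x * s * Real.exp (-(x * s))) * (s ^ (α - 1) * σ (Real.log s)))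
        = (∫⁻ t, ENNReal.ofReal (t * Real.exp (-(x * t))) ∂μ)
          + ∫⁻ t, (∫⁻ s in Set.Ioo 0 t,
              ENNReal.ofReal (x * s * Real.exp (-(x * s)))) ∂μ := by rw [hTB]
      _ = ∫⁻ t, (ENNReal.ofReal (t * Real.exp (-(x * t)))
          + ∫⁻ s in Set.Ioo 0 t, ENNReal.ofReal (x * s * Real.exp (-(x * s)))) ∂μ :=
            (lintegral_add_left hmeas_te _).symm
      _ = ∫⁻ t, (∫⁻ s in Set.Ioo 0 t, ENNReal.ofReal (Real.exp (-(x * s)))) ∂μ := by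
            refine lintegral_congr_ae ?_
            filter_upwards [hae] with t ht
            exact key2 t ht
      _ = ENNReal.ofReal (∫ s in Set.Ioi 0,
            Real.exp (-(x * s)) * (s ^ (α - 1) * σ (Real.log s))) := hTA
  have hBleA : (∫ s in Set.Ioi 0,
      (x * s * Real.exp (-(x * s))) * (s ^ (α - 1) * σ (Real.log s)))
      ≤ ∫ s in Set.Ioi 0, Real.exp (-(x * s)) * (s ^ (α - 1) * σ (Real.log s)) := by
    have hBA : ENNReal.ofReal (∫ s in Set.Ioi 0,
        (x * s * Real.exp (-(x * s))) * (s ^ (α - 1) * σ (Real.log s)))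
        ≤ ENNReal.ofReal (∫ s in Set.Ioi 0,
          Real.exp (-(x * s)) * (s ^ (α - 1) * σ (Real.log s))) := by
      rw [← hsum]; exact le_add_self
    exact (ENNReal.ofReal_le_ofReal_iff hAnn).mp hBA
  have hlt : ∫⁻ t, ENNReal.ofReal (t * Real.exp (-(x * t))) ∂μ
      = ENNReal.ofReal ((∫ s in Set.Ioi 0,
          Real.exp (-(x * s)) * (s ^ (α - 1) * σ (Real.log s)))
        - ∫ s in Set.Ioi 0,
          (x * s * Real.exp (-(x * s))) * (s ^ (α - 1) * σ (Real.log s))) := by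
    rw [ENNReal.ofReal_sub _ hBnn, ← hsum,
      ENNReal.add_sub_cancel_right ENNReal.ofReal_ne_top]
  have hnn_te : 0 ≤ᵐ[μ] fun t : ℝ => t * Real.exp (-(x * t)) := by
    filter_upwards [hae] with t ht
    exact le_of_lt (mul_pos ht (Real.exp_pos _))
  have hsm_te : AEStronglyMeasurable (fun t : ℝ => t * Real.exp (-(x * t))) μ :=
    (continuous_id.mul (hce x)).aestronglyMeasurable
  have hInt_te : Integrable (fun t : ℝ => t * Real.exp (-(x * t))) μ := by
    refine ⟨hsm_te, ?_⟩
    rw [hasFiniteIntegral_iff_ofReal hnn_te, hlt]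
    exact ENNReal.ofReal_lt_top
  have hval : ∫ t, t * Real.exp (-(x * t)) ∂μ
      = (∫ s in Set.Ioi 0, Real.exp (-(x * s)) * (s ^ (α - 1) * σ (Real.log s)))
        - ∫ s in Set.Ioi 0,
          (x * s * Real.exp (-(x * s))) * (s ^ (α - 1) * σ (Real.log s)) := by
    rw [integral_eq_lintegral_of_nonneg_ae hnn_te hsm_te, hlt,
      ENNReal.toReal_ofReal (by linarith)]
  -- integrability of 1 - exp(-(c t)) w.r.t. μ
  have hA1 : ∀ c : ℝ, 0 < c → ∫⁻ t, ENNReal.ofReal (1 - Real.exp (-(c * t))) ∂μ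
      = ENNReal.ofReal (∫ s in Set.Ioi 0,
          c * Real.exp (-(c * s)) * (s ^ (α - 1) * σ (Real.log s))) := by
    intro c hc
    have hint : IntegrableOn
        (fun s : ℝ => c * Real.exp (-(c * s)) * (s ^ (α - 1) * σ (Real.log s)))
        (Set.Ioi 0) :=
      IntegrableOn.congr_fun ((hIf c hc).const_mul c) (fun s _ => by ring) measurableSet_Ioi
    calc ∫⁻ t, ENNReal.ofReal (1 - Real.exp (-(c * t))) ∂μ
        = ∫⁻ t, (∫⁻ s in Set.Ioo 0 t, ENNReal.ofReal (c * Real.exp (-(c * s)))) ∂μ := by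
          refine lintegral_congr_ae ?_
          filter_upwards [hae] with t ht
          exact key1 c hc t ht
      _ = ENNReal.ofReal (∫ s in Set.Ioi 0,
            c * Real.exp (-(c * s)) * (s ^ (α - 1) * σ (Real.log s))) :=
          hTon (fun s => c * Real.exp (-(c * s))) (continuous_const.mul (hce c))
            (fun s _ => le_of_lt (mul_pos hc (Real.exp_pos _))) hint
  have hnn1 : ∀ c : ℝ, 0 < c → (0:ℝ→ℝ) ≤ᵐ[μ] fun t => 1 - Real.exp (-(c * t)) := by
    intro c hc
    filter_upwards [hae] with t ht
    have ht' : (0:ℝ) < t := ht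
    have h1 : Real.exp (-(c * t)) ≤ 1 := Real.exp_le_one_iff.mpr (by nlinarith)
    show (0:ℝ) ≤ 1 - Real.exp (-(c * t))
    linarith
  have hInt1 : ∀ c : ℝ, 0 < c → Integrable (fun t : ℝ => 1 - Real.exp (-(c * t))) μ := by
    intro c hc
    refine ⟨(continuous_const.sub (hce c)).aestronglyMeasurable, ?_⟩
    rw [hasFiniteIntegral_iff_ofReal (hnn1 c hc), hA1 c hc]
    exact ENNReal.ofReal_lt_top
  -- differentiation under the integral sign
  have hbound : ∀ᵐ t ∂μ, ∀ y ∈ Metric.ball x (x/2),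
      ‖t * Real.exp (-(y * t))‖ ≤ (2/x) * (1 - Real.exp (-(x/2 * t))) := by
    filter_upwards [hae] with t ht
    intro y hy
    have ht' : (0:ℝ) < t := ht
    have hy' : x/2 < y := by
      rw [Metric.mem_ball, Real.dist_eq, abs_lt] at hy
      linarith [hy.1]
    have h1 : ‖t * Real.exp (-(y * t))‖ = t * Real.exp (-(y * t)) :=
      Real.norm_of_nonneg (le_of_lt (mul_pos ht' (Real.exp_pos _)))
    rw [h1]
    have h2 : Real.exp (-(y * t)) ≤ Real.exp (-(x/2 * t)) :=
      Real.exp_le_exp.mpr (by nlinarith)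
    have h3 := mul_exp_neg_le (x/2 * t)
    have hx' : x ≠ 0 := hx.ne'
    calc t * Real.exp (-(y * t)) ≤ t * Real.exp (-(x/2 * t)) :=
          mul_le_mul_of_nonneg_left h2 ht'.le
      _ = (2/x) * ((x/2*t) * Real.exp (-(x/2*t))) := by field_simp
      _ ≤ (2/x) * (1 - Real.exp (-(x/2*t))) :=
          mul_le_mul_of_nonneg_left h3 (div_pos two_pos hx).le
  have hder := hasDerivAt_integral_of_dominated_loc_of_deriv_le
    (F := fun y t => 1 - Real.exp (-(y * t)))
    (F' := fun y t => t * Real.exp (-(y * t)))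
    (bound := fun t => (2/x) * (1 - Real.exp (-(x/2 * t))))
    (μ := μ) (x₀ := x) (Metric.ball_mem_nhds x (half_pos hx))
    (Filter.Eventually.of_forall fun y =>
      (continuous_const.sub (hce y)).aestronglyMeasurable)
    (hInt1 x hx) hsm_te
    hbound ((hInt1 (x/2) (half_pos hx)).const_mul (2/x))
    (Filter.Eventually.of_forall fun t y _ => hasDerivAt_one_sub_exp t y)
  obtain ⟨-, hder'⟩ := hder
  have hfun : (fun y : ℝ => ∫ t in Set.Ioi (0:ℝ), (1 - Real.exp (-(y * t))) ∂μ)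
      = fun y : ℝ => ∫ t, (1 - Real.exp (-(y * t))) ∂μ := funext fun y => by rw [hres]
  rw [hfun, hder'.deriv, hval]
  -- integration by parts on (0,∞)
  set Φ : ℝ → ℝ := fun s => s ^ α * σ (Real.log s) * Real.exp (-(x * s)) with hΦdef
  have hΦ0 : Φ 0 = 0 := by
    simp [hΦdef, Real.zero_rpow hα0.ne']
  have hΦcont : ContinuousWithinAt Φ (Set.Ici 0) 0 := by
    show Tendsto Φ (𝓝[Set.Ici 0] 0) (𝓝 (Φ 0))
    rw [hΦ0]
    apply squeeze_zero_norm' (a := fun s : ℝ => M * s ^ α)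
    · filter_upwards [self_mem_nhdsWithin] with s hs
      have hs' : (0:ℝ) ≤ s := hs
      have h1 : ‖Φ s‖ = s ^ α * |σ (Real.log s)| * Real.exp (-(x*s)) := by
        rw [hΦdef]
        simp only [Real.norm_eq_abs]
        rw [abs_mul, abs_mul, abs_of_nonneg (Real.rpow_nonneg hs' _),
          abs_of_pos (Real.exp_pos _)]
      rw [h1]
      have h2 : Real.exp (-(x*s)) ≤ 1 := Real.exp_le_one_iff.mpr (by nlinarith)
      have h4 : (0:ℝ) ≤ s ^ α := Real.rpow_nonneg hs' _
      calc s ^ α * |σ (Real.log s)| * Real.exp (-(x*s))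
          ≤ s ^ α * M * 1 := by
            apply mul_le_mul (mul_le_mul_of_nonneg_left (hMa _) h4) h2
              (Real.exp_pos _).le (by positivity)
        _ = M * s ^ α := by ring
    · have h5 : Tendsto (fun s : ℝ => s ^ α) (𝓝[Set.Ici 0] 0) (𝓝 ((0:ℝ) ^ α)) :=
        (Real.continuousAt_rpow_const 0 α (Or.inr hα0.le)).continuousWithinAt
      rw [Real.zero_rpow hα0.ne'] at h5
      simpa using h5.const_mul M
  have hΦtop : Tendsto Φ atTop (𝓝 0) := by
    apply squeeze_zero_norm' (a := fun s : ℝ => M * (s ^ α * Real.exp (-x * s)))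
    · filter_upwards [eventually_ge_atTop (0:ℝ)] with s hs
      have h1 : ‖Φ s‖ = s ^ α * |σ (Real.log s)| * Real.exp (-(x*s)) := by
        rw [hΦdef]
        simp only [Real.norm_eq_abs]
        rw [abs_mul, abs_mul, abs_of_nonneg (Real.rpow_nonneg hs _),
          abs_of_pos (Real.exp_pos _)]
      rw [h1, show -x * s = -(x*s) by ring]
      have h4 : (0:ℝ) ≤ s ^ α := Real.rpow_nonneg hs _
      calc s ^ α * |σ (Real.log s)| * Real.exp (-(x*s))
          ≤ s ^ α * M * Real.exp (-(x*s)) := by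
            apply mul_le_mul_of_nonneg_right _ (Real.exp_pos _).le
            exact mul_le_mul_of_nonneg_left (hMa _) h4
        _ = M * (s ^ α * Real.exp (-(x*s))) := by ring
    · simpa using (tendsto_rpow_mul_exp_neg_mul_atTop_nhds_zero α x hx).const_mul M
  have hΦd : ∀ s ∈ Set.Ioi (0:ℝ), HasDerivAt Φ
      (Real.exp (-(x*s)) * (s ^ (α-1) * σ (Real.log s))
        - (x * s * Real.exp (-(x*s))) * (s ^ (α-1) * σ (Real.log s))
        - Real.exp (-(x*s)) * (s ^ (α-1) *
            ((1-α) * σ (Real.log s) - deriv σ (Real.log s)))) s := by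
    intro s hs
    have hs' : (0:ℝ) < s := hs
    have hu := hasDerivAt_tail (α := α + 1) σ hσC1 hs'
    rw [show α + 1 - 1 = α by ring, show α + 1 - 2 = α - 1 by ring] at hu
    have he : HasDerivAt (fun u : ℝ => Real.exp (-(x * u))) (-x * Real.exp (-(x * s))) s := by
      have h1 : HasDerivAt (fun u : ℝ => -(x * u)) (-x) s := by
        exact (((hasDerivAt_id s).const_mul x).neg).congr_deriv (by ring)
      have h2 := (Real.hasDerivAt_exp (-(x * s))).comp s h1
      exact h2.congr_deriv (by ring)
    have hprod := hu.mul he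
    have hss : s ^ α = s * s ^ (α - 1) := by
      have h := Real.rpow_add hs' 1 (α - 1)
      rw [Real.rpow_one] at h
      rw [show (1:ℝ) + (α - 1) = α by ring] at h
      exact h
    refine hprod.congr_deriv ?_
    rw [hss]
    ring
  have hGint : IntegrableOn (fun s : ℝ =>
      Real.exp (-(x*s)) * (s ^ (α-1) * σ (Real.log s))
        - (x * s * Real.exp (-(x*s))) * (s ^ (α-1) * σ (Real.log s))
        - Real.exp (-(x*s)) * (s ^ (α-1) *
            ((1-α) * σ (Real.log s) - deriv σ (Real.log s)))) (Set.Ioi 0) :=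
    ((hIf x hx).sub (hIsf x hx)).sub hIk
  have hFTC := integral_Ioi_of_hasDerivAt_of_tendsto hΦcont hΦd hGint hΦtop
  rw [hΦ0, sub_zero] at hFTC
  have hint12 : IntegrableOn (fun s : ℝ =>
      Real.exp (-(x*s)) * (s ^ (α-1) * σ (Real.log s))
        - (x * s * Real.exp (-(x*s))) * (s ^ (α-1) * σ (Real.log s))) (Set.Ioi 0) :=
    (hIf x hx).sub (hIsf x hx)
  rw [integral_sub hint12 hIk, integral_sub (hIf x hx) (hIsf x hx)] at hFTC
  linarith [hFTC]
end
end

section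
/- Let ψ be a Bernstein function with lim_{x↓0} ψ(x) = 0 and ψ(1) > 0. Then the numbers p_j := (−1)^{j−1} ψ^{(j)}(1) / (j! · ψ(1)) satisfy p_j ≥ 0 for all j ∈ ℕ and ∑_{j=1}^∞ p_j = 1; hence they define a probability distribution on the positive integers (the semi-fractional Sibuya distribution associated to ψ). -/
open MeasureTheory Set Filter Real

noncomputable section

open scoped Nat

lemma itdw_open {f : ℝ → ℝ} (n : ℕ) {s : Set ℝ} {x : ℝ}
    (hs : IsOpen s) (hx : x ∈ s) :
    iteratedDerivWithin n f s x = iteratedDeriv n f x := by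
  rw [iteratedDerivWithin_eq_iteratedFDerivWithin, iteratedDeriv_eq_iteratedFDeriv,
    iteratedFDerivWithin_of_isOpen n hs hx]

lemma cont_itd {ψ : ℝ → ℝ} (hC : ContDiffOn ℝ (⊤ : ℕ∞) ψ (Set.Ioi 0)) (m : ℕ) :
    ContinuousOn (iteratedDeriv m ψ) (Set.Ioi 0) := by
  have h := hC.continuousOn_iteratedDerivWithin (m := m) (mod_cast le_top)
    isOpen_Ioi.uniqueDiffOn
  exact h.congr fun x hx => (itdw_open m isOpen_Ioi hx).symm

lemma taylor_hda {ψ : ℝ → ℝ} (hC : ContDiffOn ℝ (⊤ : ℕ∞) ψ (Set.Ioi 0))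
    (n : ℕ) (x : ℝ) {t : ℝ} (ht : t ∈ Set.Ioi (0:ℝ)) :
    HasDerivAt (fun y => taylorWithinEval ψ n (Set.Ioi 0) y x)
      (((n ! : ℝ)⁻¹ * (x - t) ^ n) * iteratedDeriv (n+1) ψ t) t := by
  have h := hasDerivWithinAt_taylorWithinEval (f := ψ) (x := x) (y := t) (n := n)
      (s := Set.Ioi 0) (s' := Set.Ioi 0)
      isOpen_Ioi.uniqueDiffOn self_mem_nhdsWithin ht
      (subset_refl _) (hC.of_le (by exact_mod_cast le_top))
      ((hC.differentiableOn_iteratedDerivWithin (mod_cast lt_top_iff_ne_top.2 (by simp))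
        isOpen_Ioi.uniqueDiffOn) t ht)
  have h2 := h.hasDerivAt (isOpen_Ioi.mem_nhds ht)
  rw [itdw_open (n+1) isOpen_Ioi ht] at h2
  simpa using h2

lemma key_identity {ψ : ℝ → ℝ} (hC : ContDiffOn ℝ (⊤ : ℕ∞) ψ (Set.Ioi 0))
    {x : ℝ} (hx0 : 0 < x) (hx1 : x < 1) (n : ℕ) :
    taylorWithinEval ψ n (Set.Ioi 0) 1 x
      = ψ x + ∫ t in x..1, ((n ! : ℝ)⁻¹ * (t - x) ^ n) * ((-1:ℝ)^n * iteratedDeriv (n+1) ψ t) := by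
  have hsub : Set.uIcc x 1 ⊆ Set.Ioi 0 := by
    rw [Set.uIcc_of_le hx1.le]
    intro t ht
    exact lt_of_lt_of_le hx0 ht.1
  have hint : IntervalIntegrable
      (fun t => ((n ! : ℝ)⁻¹ * (x - t) ^ n) * iteratedDeriv (n+1) ψ t) MeasureTheory.volume x 1 := by
    apply ContinuousOn.intervalIntegrable
    exact (continuousOn_const.mul ((continuousOn_const.sub continuousOn_id).pow n)).mul
      ((cont_itd hC (n+1)).mono hsub)
  have hftc := intervalIntegral.integral_eq_sub_of_hasDerivAt
    (f := fun y => taylorWithinEval ψ n (Set.Ioi 0) y x)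
    (f' := fun t => ((n ! : ℝ)⁻¹ * (x - t) ^ n) * iteratedDeriv (n+1) ψ t)
    (fun t ht => taylor_hda hC n x (hsub ht)) hint
  rw [taylorWithinEval_self] at hftc
  have hcongr : (∫ t in x..1, ((n ! : ℝ)⁻¹ * (x - t) ^ n) * iteratedDeriv (n+1) ψ t)
      = ∫ t in x..1, ((n ! : ℝ)⁻¹ * (t - x) ^ n) * ((-1:ℝ)^n * iteratedDeriv (n+1) ψ t) := by
    apply intervalIntegral.integral_congr
    intro t _
    have h : (x - t) ^ n = (-1:ℝ)^n * (t - x)^n := by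
      rw [← neg_sub t x, neg_pow]
    simp only []
    rw [h]; ring
  rw [hcongr] at hftc
  linarith

/-- the semi-fractional Sibuya probabilities
`p_j = (−1)^(j−1) ψ^(j)(1)/(j! ψ(1))`, `j ≥ 1`, are non-negative and sum to `1`. -/
theorem stmt9 (ψ : ℝ → ℝ) (hψ : IsBernstein ψ)
    (h0 : Filter.Tendsto ψ (nhdsWithin 0 (Set.Ioi 0)) (nhds 0)) (h1 : 0 < ψ 1) :
    (∀ j : ℕ,
      0 ≤ (-1 : ℝ) ^ j * iteratedDeriv (j + 1) ψ 1 / ((j + 1).factorial * ψ 1)) ∧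
    HasSum
      (fun j : ℕ => (-1 : ℝ) ^ j * iteratedDeriv (j + 1) ψ 1 / ((j + 1).factorial * ψ 1))
      1 := by
  obtain ⟨hC, hpos, hsign⟩ := hψ
  -- basic sign facts
  have hsign' : ∀ n : ℕ, ∀ t : ℝ, 0 < t → 0 ≤ (-1:ℝ)^n * iteratedDeriv (n+1) ψ t := by
    intro n t ht
    have := hsign (n+1) (Nat.succ_pos n) t ht
    simpa using this
  set q : ℕ → ℝ := fun j => (-1:ℝ)^j * iteratedDeriv (j+1) ψ 1 / ((j+1)! : ℝ) with hq
  have hqnn : ∀ j, 0 ≤ q j := fun j =>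
    div_nonneg (hsign' j 1 one_pos) (by positivity)
  -- the remainder integral
  set G : ℕ → ℝ → ℝ := fun n x =>
    ∫ t in x..1, ((n ! : ℝ)⁻¹ * (t - x) ^ n) * ((-1:ℝ)^n * iteratedDeriv (n+1) ψ t) with hG
  -- integrability of remainder integrands on subintervals of (0,1]
  have hint : ∀ n : ℕ, ∀ c a b : ℝ, 0 < a → a ≤ b → b ≤ 1 →
      IntervalIntegrable (fun t => ((n ! : ℝ)⁻¹ * (t - c) ^ n) * ((-1:ℝ)^n * iteratedDeriv (n+1) ψ t))
        MeasureTheory.volume a b := by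
    intro n c a b ha hab hb1
    apply ContinuousOn.intervalIntegrable
    have hsub : Set.uIcc a b ⊆ Set.Ioi 0 := by
      rw [Set.uIcc_of_le hab]
      intro t ht; exact lt_of_lt_of_le ha ht.1
    exact (continuousOn_const.mul ((continuousOn_id.sub continuousOn_const).pow n)).mul
      (continuousOn_const.mul ((cont_itd hC (n+1)).mono hsub))
  -- the key sum identity
  have KI : ∀ x : ℝ, 0 < x → x < 1 → ∀ n : ℕ,
      ∑ i ∈ Finset.range n, q i * (1-x)^(i+1) = ψ 1 - ψ x - G n x := by
    intro x hx0 hx1 n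
    have hki := key_identity hC hx0 hx1 n
    have htay : taylorWithinEval ψ n (Set.Ioi 0) 1 x
        = ψ 1 - ∑ i ∈ Finset.range n, q i * (1-x)^(i+1) := by
      rw [taylor_within_apply]
      rw [Finset.sum_range_succ']
      have h0' : (((0:ℕ)! : ℝ)⁻¹ * (x - 1) ^ 0) • iteratedDerivWithin 0 ψ (Set.Ioi 0) 1 = ψ 1 := by
        simp [iteratedDerivWithin_zero]
      rw [h0']
      have hterm : ∀ i ∈ Finset.range n,
          ((((i+1):ℕ)! : ℝ)⁻¹ * (x - 1) ^ (i+1)) • iteratedDerivWithin (i+1) ψ (Set.Ioi 0) 1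
            = -(q i * (1-x)^(i+1)) := by
        intro i _
        rw [itdw_open (i+1) isOpen_Ioi (by norm_num : (1:ℝ) ∈ Set.Ioi (0:ℝ))]
        have hx1' : (x - 1) ^ (i+1) = (-1:ℝ)^(i+1) * (1-x)^(i+1) := by
          rw [← neg_sub (1:ℝ) x, neg_pow]
        rw [smul_eq_mul, hx1']
        simp only [hq]
        simp only [pow_succ]
        ring
      rw [Finset.sum_congr rfl hterm, Finset.sum_neg_distrib]
      ring
    rw [htay] at hki
    rw [hG]
    linarith
  -- nonnegativity of the remainder
  have hGnn : ∀ n : ℕ, ∀ x : ℝ, 0 < x → x < 1 → 0 ≤ G n x := by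
    intro n x hx0 hx1
    apply intervalIntegral.integral_nonneg hx1.le
    intro u hu
    have hu0 : 0 < u := lt_of_lt_of_le hx0 hu.1
    have hux : (0:ℝ) ≤ u - x := by linarith [hu.1]
    exact mul_nonneg (mul_nonneg (by positivity) (pow_nonneg hux n)) (hsign' n u hu0)
  -- ratio bound on the remainder
  have hGb : ∀ n : ℕ, ∀ x' x : ℝ, 0 < x' → x' < x → x < 1 →
      G n x ≤ ((1-x)/(1-x'))^n * ψ 1 := by
    intro n x' x hx'0 hx'x hx1
    have hx0 : 0 < x := hx'0.trans hx'x
    have h1x' : (0:ℝ) < 1 - x' := by linarith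
    set r : ℝ := (1-x)/(1-x') with hr
    have hrnn : 0 ≤ r := by
      apply div_nonneg <;> linarith
    -- step 1: pointwise comparison on [x,1]
    have hstep1 : G n x ≤ ∫ t in x..1,
        r^n * (((n ! : ℝ)⁻¹ * (t - x') ^ n) * ((-1:ℝ)^n * iteratedDeriv (n+1) ψ t)) := by
      rw [hG]
      apply intervalIntegral.integral_mono_on hx1.le (hint n x x 1 hx0 hx1.le le_rfl)
      · have := (hint n x' x 1 hx0 hx1.le le_rfl).const_mul (r^n)
        simpa [mul_assoc] using this
      · intro t ht
        have ht0 : 0 < t := lt_of_lt_of_le hx0 ht.1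
        have hpow : (t - x)^n ≤ r^n * (t - x')^n := by
          have h1 : t - x ≤ r * (t - x') := by
            rw [hr, div_mul_eq_mul_div, le_div_iff₀ h1x']
            nlinarith [ht.2, hx'x.le]
          have h2 : (0:ℝ) ≤ t - x := by linarith [ht.1]
          calc (t - x)^n ≤ (r * (t - x'))^n := pow_le_pow_left₀ h2 h1 n
            _ = r^n * (t - x')^n := mul_pow _ _ _
        have hgn : 0 ≤ (-1:ℝ)^n * iteratedDeriv (n+1) ψ t := hsign' n t ht0
        have hfac : (0:ℝ) ≤ (n ! : ℝ)⁻¹ := by positivity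
        calc ((n ! : ℝ)⁻¹ * (t - x) ^ n) * ((-1:ℝ)^n * iteratedDeriv (n+1) ψ t)
            ≤ ((n ! : ℝ)⁻¹ * (r^n * (t - x') ^ n)) * ((-1:ℝ)^n * iteratedDeriv (n+1) ψ t) := by
              apply mul_le_mul_of_nonneg_right _ hgn
              exact mul_le_mul_of_nonneg_left hpow hfac
          _ = r^n * (((n ! : ℝ)⁻¹ * (t - x') ^ n) * ((-1:ℝ)^n * iteratedDeriv (n+1) ψ t)) := by ring
    -- step 2: pull out the constant and enlarge the interval
    have hstep2 : (∫ t in x..1,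
        r^n * (((n ! : ℝ)⁻¹ * (t - x') ^ n) * ((-1:ℝ)^n * iteratedDeriv (n+1) ψ t)))
          = r^n * ∫ t in x..1, ((n ! : ℝ)⁻¹ * (t - x') ^ n) * ((-1:ℝ)^n * iteratedDeriv (n+1) ψ t) :=
      intervalIntegral.integral_const_mul _ _
    have hstep3 : (∫ t in x..1, ((n ! : ℝ)⁻¹ * (t - x') ^ n) * ((-1:ℝ)^n * iteratedDeriv (n+1) ψ t))
        ≤ G n x' := by
      rw [hG]
      have hadd := intervalIntegral.integral_add_adjacent_intervals
        (hint n x' x' x hx'0 hx'x.le hx1.le) (hint n x' x 1 hx0 hx1.le le_rfl)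
      have hnn : 0 ≤ ∫ t in x'..x, ((n ! : ℝ)⁻¹ * (t - x') ^ n) * ((-1:ℝ)^n * iteratedDeriv (n+1) ψ t) := by
        apply intervalIntegral.integral_nonneg hx'x.le
        intro u hu
        have hu0 : 0 < u := lt_of_lt_of_le hx'0 hu.1
        have hux : (0:ℝ) ≤ u - x' := by linarith [hu.1]
        exact mul_nonneg (mul_nonneg (by positivity) (pow_nonneg hux n)) (hsign' n u hu0)
      linarith
    have hstep4 : G n x' ≤ ψ 1 := by
      have := KI x' hx'0 (hx'x.trans hx1) n
      have hsumnn : 0 ≤ ∑ i ∈ Finset.range n, q i * (1-x')^(i+1) :=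
        Finset.sum_nonneg fun i _ => mul_nonneg (hqnn i)
          (pow_nonneg (by linarith : (0:ℝ) ≤ 1 - x') _)
      have hψx' : 0 ≤ ψ x' := hpos x' hx'0
      linarith
    calc G n x ≤ r^n * ∫ t in x..1, ((n ! : ℝ)⁻¹ * (t - x') ^ n) * ((-1:ℝ)^n * iteratedDeriv (n+1) ψ t) := by
          rw [← hstep2]; exact hstep1
      _ ≤ r^n * ψ 1 := by
          apply mul_le_mul_of_nonneg_left _ (pow_nonneg hrnn n)
          exact hstep3.trans hstep4
  -- the power series sums to ψ 1 - ψ x on (0,1)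
  have HSx : ∀ x : ℝ, 0 < x → x < 1 → HasSum (fun i => q i * (1-x)^(i+1)) (ψ 1 - ψ x) := by
    intro x hx0 hx1
    have hnn : ∀ i, 0 ≤ q i * (1-x)^(i+1) := fun i => mul_nonneg (hqnn i)
      (pow_nonneg (by linarith : (0:ℝ) ≤ 1 - x) _)
    rw [hasSum_iff_tendsto_nat_of_nonneg hnn]
    have hGlim : Tendsto (fun n => G n x) atTop (nhds 0) := by
      set r : ℝ := (1-x)/(1-x/2) with hr
      have hrnn : 0 ≤ r := by
        apply div_nonneg <;> linarith
      have hrlt : r < 1 := by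
        rw [hr, div_lt_one (by linarith)]
        linarith
      have hrpow : Tendsto (fun n : ℕ => r^n * ψ 1) atTop (nhds 0) := by
        have := (tendsto_pow_atTop_nhds_zero_of_lt_one hrnn hrlt).mul_const (ψ 1)
        simpa using this
      apply squeeze_zero (fun n => hGnn n x hx0 hx1) (fun n => ?_) hrpow
      exact hGb n (x/2) x (by linarith) (by linarith) hx1
    have : Tendsto (fun n => ψ 1 - ψ x - G n x) atTop (nhds (ψ 1 - ψ x - 0)) :=
      tendsto_const_nhds.sub hGlim
    rw [sub_zero] at this
    apply this.congr
    intro n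
    exact (KI x hx0 hx1 n).symm
  -- partial sums of q are bounded by ψ 1
  have Part : ∀ n : ℕ, ∑ i ∈ Finset.range n, q i ≤ ψ 1 := by
    intro n
    have hlim : Tendsto (fun x : ℝ => ∑ i ∈ Finset.range n, q i * (1-x)^(i+1))
        (nhdsWithin 0 (Set.Ioi 0)) (nhds (∑ i ∈ Finset.range n, q i)) := by
      have hcont : Continuous (fun x : ℝ => ∑ i ∈ Finset.range n, q i * (1-x)^(i+1)) := by
        apply continuous_finset_sum
        intro i _
        exact continuous_const.mul ((continuous_const.sub continuous_id).pow _)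
      have := (hcont.tendsto 0).mono_left (nhdsWithin_le_nhds (s := Set.Ioi (0:ℝ)))
      simpa using this
    refine le_of_tendsto hlim ?_
    filter_upwards [Ioo_mem_nhdsGT_of_mem (by norm_num : (0:ℝ) ∈ Set.Ico (0:ℝ) 1)] with x hx
    have := KI x hx.1 hx.2 n
    have hψx : 0 ≤ ψ x := hpos x hx.1
    have hGx : 0 ≤ G n x := hGnn n x hx.1 hx.2
    linarith
  have hqs : Summable q := summable_of_sum_range_le hqnn Part
  have hS_le : ∑' i, q i ≤ ψ 1 := Real.tsum_le_of_sum_range_le hqnn Part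
  have hS_ge : ψ 1 ≤ ∑' i, q i := by
    have hbound : ∀ x : ℝ, 0 < x → x < 1 → ψ 1 - ψ x ≤ ∑' i, q i := by
      intro x hx0 hx1
      rw [← (HSx x hx0 hx1).tsum_eq]
      apply Summable.tsum_le_tsum _ (HSx x hx0 hx1).summable hqs
      intro i
      have : (1-x)^(i+1) ≤ 1 := pow_le_one₀ (by linarith) (by linarith)
      calc q i * (1-x)^(i+1) ≤ q i * 1 := mul_le_mul_of_nonneg_left this (hqnn i)
        _ = q i := mul_one _
    have hlim : Tendsto (fun x : ℝ => ψ 1 - ψ x) (nhdsWithin 0 (Set.Ioi 0))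
        (nhds (ψ 1 - 0)) := tendsto_const_nhds.sub h0
    rw [sub_zero] at hlim
    refine le_of_tendsto hlim ?_
    filter_upwards [Ioo_mem_nhdsGT_of_mem (by norm_num : (0:ℝ) ∈ Set.Ico (0:ℝ) 1)] with x hx
    exact hbound x hx.1 hx.2
  have hsum : HasSum q (ψ 1) := by
    have := hqs.hasSum
    rwa [le_antisymm hS_le hS_ge] at this
  constructor
  · intro j
    exact div_nonneg (hsign' j 1 one_pos) (by positivity)
  · have h := hsum.div_const (ψ 1)
    rw [div_self (ne_of_gt h1)] at h
    have heq : (fun j : ℕ => (-1:ℝ)^j * iteratedDeriv (j+1) ψ 1 / ((j+1).factorial * ψ 1))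
        = fun i => q i / ψ 1 := by
      funext j
      rw [hq, div_div]
    rw [heq]
    exact h
end
end

section
/- Let ψ be a Bernstein function with lim_{x↓0} ψ(x) = 0 and ψ(1) > 0, and let p_j := (−1)^{j−1} ψ^{(j)}(1) / (j! · ψ(1)) for j ∈ ℕ. Then the probability generating function of the associated semi-fractional Sibuya distribution satisfies G(z) := ∑_{j=1}^∞ p_j z^j = 1 − ψ(1 − z)/ψ(1) for all z ∈ [0, 1), where ψ(0) is interpreted as the limit lim_{x↓0} ψ(x) = 0. -/
open MeasureTheory Set Filter Real

noncomputable section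

private lemma reflect_iter (f : ℝ → ℝ) (c : ℝ) (n : ℕ) (t : ℝ) :
    iteratedDeriv n (fun u => f (c - u)) t = (-1:ℝ)^n * iteratedDeriv n f (c - t) := by
  have h1 : (fun u => f (c - u)) = (fun z => (fun u => f (-u)) (z + (-c))) := by
    funext u; congr 1; ring
  have h3 := congrFun (iteratedDeriv_comp_add_const n (fun u => f (-u)) (-c)) t
  rw [h1, h3, iteratedDeriv_comp_neg]
  have h2 : -(t + -c) = c - t := by ring
  rw [h2, smul_eq_mul]

private lemma iterDW_eq_iter {f : ℝ → ℝ} {s T : Set ℝ} (hs : IsOpen s)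
    (hf : ContDiffOn ℝ (⊤:ℕ∞) f s) (hT : UniqueDiffOn ℝ T) (hsub : T ⊆ s)
    (m : ℕ) {x : ℝ} (hx : x ∈ T) :
    iteratedDerivWithin m f T x = iteratedDeriv m f x := by
  have H : HasFTaylorSeriesUpToOn ((⊤:ℕ∞) : WithTop ℕ∞) f (ftaylorSeriesWithin ℝ f s) T :=
    (hf.ftaylorSeriesWithin hs.uniqueDiffOn).mono hsub
  have h1 : ftaylorSeriesWithin ℝ f s x m = iteratedFDerivWithin ℝ m f T x :=
    H.eq_iteratedFDerivWithin_of_uniqueDiffOn (by exact_mod_cast le_top) hT hx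
  have h2 : ftaylorSeriesWithin ℝ f s x m = iteratedFDeriv ℝ m f x := by
    show iteratedFDerivWithin ℝ m f s x = _
    rw [← Set.univ_inter s, iteratedFDerivWithin_inter_open hs (hsub hx),
      iteratedFDerivWithin_univ]
  have h3 : iteratedFDerivWithin ℝ m f T x = iteratedFDeriv ℝ m f x := h1.symm.trans h2
  rw [iteratedDerivWithin_eq_iteratedFDerivWithin, iteratedDeriv_eq_iteratedFDeriv, h3]

/-- partial Taylor sum of `ψ` at base `p` with decrement `w`. -/
private def TS (ψ : ℝ → ℝ) (p w : ℝ) (n : ℕ) : ℝ :=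
  ∑ k ∈ Finset.range (n+1), (-1:ℝ)^k * iteratedDeriv k ψ p * w^k / (k.factorial : ℝ)

private lemma taylor_both (ψ : ℝ → ℝ) (hC : ContDiffOn ℝ (⊤:ℕ∞) ψ (Set.Ioi 0))
    {p w : ℝ} (hp : 0 < p) (hw : 0 < w) (hwp : w < p) (n : ℕ) :
    (∃ σ ∈ Set.Ioo (p-w) p, ψ (p-w) = TS ψ p w n +
      (-1:ℝ)^(n+1) * iteratedDeriv (n+1) ψ σ * w^(n+1) / ((n+1).factorial : ℝ)) ∧
    (∃ σ ∈ Set.Ioo (p-w) p, ψ (p-w) = TS ψ p w n +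
      (-1:ℝ)^(n+1) * iteratedDeriv (n+1) ψ σ * (σ - (p-w))^n / (n.factorial : ℝ) * w) := by
  set g : ℝ → ℝ := fun t => ψ (2*p - t) with hg_def
  have hlt : p < p + w := by linarith
  have hsub : Set.Icc p (p+w) ⊆ Set.Iio (2*p) := fun t ht => lt_of_le_of_lt ht.2 (by linarith)
  have hmaps : Set.MapsTo (fun t => 2*p - t) (Set.Iio (2*p)) (Set.Ioi 0) := by
    intro t ht
    simp only [Set.mem_Iio] at ht
    simp only [Set.mem_Ioi]
    linarith
  have hgC : ContDiffOn ℝ (⊤:ℕ∞) g (Set.Iio (2*p)) :=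
    hC.comp ((contDiff_const.sub contDiff_id).contDiffOn) hmaps
  have hiter : ∀ m : ℕ, ∀ t ∈ Set.Icc p (p+w),
      iteratedDerivWithin m g (Set.Icc p (p+w)) t = (-1:ℝ)^m * iteratedDeriv m ψ (2*p - t) :=
    fun m t ht => (iterDW_eq_iter isOpen_Iio hgC (uniqueDiffOn_Icc hlt) hsub m ht).trans
      (reflect_iter ψ (2*p) m t)
  have hiter' : ∀ m : ℕ, ∀ t ∈ Set.Iio (2*p),
      iteratedDerivWithin m g (Set.Iio (2*p)) t = iteratedDeriv m g t :=
    fun m t ht => iterDW_eq_iter isOpen_Iio hgC isOpen_Iio.uniqueDiffOn (subset_refl _) m ht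
  have hgC' : ContDiffOn ℝ (n:ℕ) g (Set.Icc p (p+w)) :=
    (hgC.mono hsub).of_le (by exact_mod_cast le_top)
  have hdiff : DifferentiableOn ℝ (iteratedDerivWithin n g (Set.Icc p (p+w)))
      (Set.Ioo p (p+w)) := by
    have h1 : DifferentiableOn ℝ (iteratedDerivWithin n g (Set.Iio (2*p))) (Set.Iio (2*p)) :=
      hgC.differentiableOn_iteratedDerivWithin (by exact_mod_cast (ENat.coe_lt_top n))
        isOpen_Iio.uniqueDiffOn
    intro t ht
    have htI : t ∈ Set.Icc p (p+w) := Set.Ioo_subset_Icc_self ht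
    have h2 : DifferentiableWithinAt ℝ (iteratedDerivWithin n g (Set.Iio (2*p)))
        (Set.Ioo p (p+w)) t :=
      (h1 _ (hsub htI)).mono (subset_trans Set.Ioo_subset_Icc_self hsub)
    refine h2.congr (fun y hy => ?_) ?_
    · have hyI : y ∈ Set.Icc p (p+w) := Set.Ioo_subset_Icc_self hy
      rw [hiter n y hyI, hiter' n y (hsub hyI), reflect_iter]
    · rw [hiter n t htI, hiter' n t (hsub htI), reflect_iter]
  have hval : g (p+w) = ψ (p-w) := by
    simp only [hg_def]; congr 1; ring
  have hTS : taylorWithinEval g n (Set.Icc p (p+w)) p (p+w) = TS ψ p w n := by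
    rw [taylor_within_apply, TS]
    refine Finset.sum_congr rfl (fun k hk => ?_)
    rw [hiter k p (Set.left_mem_Icc.mpr hlt.le), smul_eq_mul]
    have hww : p + w - p = w := by ring
    have hpp : 2*p - p = p := by ring
    rw [hww, hpp]; ring
  constructor
  · obtain ⟨ξ, hξ, hR⟩ := taylor_mean_remainder_lagrange hlt.ne (by rwa [Set.uIcc_of_le hlt.le])
        (by rwa [Set.uIcc_of_le hlt.le, Set.uIoo_of_le hlt.le])
    rw [Set.uIoo_of_le hlt.le] at hξ
    rw [Set.uIcc_of_le hlt.le] at hR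
    refine ⟨2*p - ξ, (by simp only [Set.mem_Ioo] at hξ ⊢; exact ⟨by linarith, by linarith⟩), ?_⟩
    have hξI : ξ ∈ Set.Icc p (p+w) := Set.Ioo_subset_Icc_self hξ
    rw [hval, hTS, hiter (n+1) ξ hξI] at hR
    have hww : p + w - p = w := by ring
    rw [hww] at hR
    linarith [hR]
  · obtain ⟨ξ, hξ, hR⟩ := taylor_mean_remainder_cauchy hlt.ne (by rwa [Set.uIcc_of_le hlt.le])
        (by rwa [Set.uIcc_of_le hlt.le, Set.uIoo_of_le hlt.le])
    rw [Set.uIoo_of_le hlt.le] at hξ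
    rw [Set.uIcc_of_le hlt.le] at hR
    refine ⟨2*p - ξ, (by simp only [Set.mem_Ioo] at hξ ⊢; exact ⟨by linarith, by linarith⟩), ?_⟩
    have hξI : ξ ∈ Set.Icc p (p+w) := Set.Ioo_subset_Icc_self hξ
    rw [hval, hTS, hiter (n+1) ξ hξI] at hR
    have hww : p + w - p = w := by ring
    have hss : p + w - ξ = (2*p - ξ) - (p - w) := by ring
    rw [hww, hss] at hR
    linarith [hR]

private lemma sign_term (ψ : ℝ → ℝ) (hψ : IsBernstein ψ) {σ : ℝ} (hσ : 0 < σ) (m : ℕ) :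
    0 ≤ (-1:ℝ)^m * iteratedDeriv (m+1) ψ σ := by
  have := hψ.2.2 (m+1) (Nat.succ_pos m) σ hσ
  simpa using this

private lemma TS_le (ψ : ℝ → ℝ) (hψ : IsBernstein ψ) {p w : ℝ} (hp : 0 < p) (hw : 0 < w)
    (hwp : w < p) (n : ℕ) : ψ (p - w) ≤ TS ψ p w n := by
  obtain ⟨⟨σ, hσ, hEq⟩, -⟩ := taylor_both ψ hψ.1 hp hw hwp n
  have hσ0 : 0 < σ := by have := hσ.1; linarith
  have h1 : 0 ≤ (-1:ℝ)^n * iteratedDeriv (n+1) ψ σ := sign_term ψ hψ hσ0 n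
  have h2 : 0 ≤ ((-1:ℝ)^n * iteratedDeriv (n+1) ψ σ) * w^(n+1) / ((n+1).factorial : ℝ) := by
    apply div_nonneg (mul_nonneg h1 (pow_nonneg hw.le _)) (by positivity)
  have h3 : (-1:ℝ)^(n+1) * iteratedDeriv (n+1) ψ σ * w^(n+1) / ((n+1).factorial : ℝ)
      = -(((-1:ℝ)^n * iteratedDeriv (n+1) ψ σ) * w^(n+1) / ((n+1).factorial : ℝ)) := by
    ring
  rw [hEq, h3]
  linarith

private lemma TS_le_psi (ψ : ℝ → ℝ) (hψ : IsBernstein ψ) {p w : ℝ} (hp : 0 < p) (hw : 0 ≤ w)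
    (n : ℕ) : TS ψ p w n ≤ ψ p := by
  rw [TS, Finset.sum_range_succ']
  have h0 : (-1:ℝ)^0 * iteratedDeriv 0 ψ p * w^0 / ((Nat.factorial 0 : ℕ) : ℝ) = ψ p := by
    simp [iteratedDeriv_zero]
  rw [h0]
  have hsum : ∑ i ∈ Finset.range n,
      (-1:ℝ)^(i+1) * iteratedDeriv (i+1) ψ p * w^(i+1) / (((i+1).factorial : ℕ) : ℝ) ≤ 0 := by
    apply Finset.sum_nonpos
    intro i _
    have h1 : 0 ≤ (-1:ℝ)^i * iteratedDeriv (i+1) ψ p := sign_term ψ hψ hp i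
    have h2 : 0 ≤ ((-1:ℝ)^i * iteratedDeriv (i+1) ψ p) * w^(i+1) / (((i+1).factorial : ℕ) : ℝ) :=
      div_nonneg (mul_nonneg h1 (pow_nonneg hw _)) (by positivity)
    have h3 : (-1:ℝ)^(i+1) * iteratedDeriv (i+1) ψ p * w^(i+1) / (((i+1).factorial : ℕ) : ℝ)
        = -(((-1:ℝ)^i * iteratedDeriv (i+1) ψ p) * w^(i+1) / (((i+1).factorial : ℕ) : ℝ)) := by
      ring
    rw [h3]; linarith
  linarith

private lemma lemB (ψ : ℝ → ℝ) (hψ : IsBernstein ψ) {p w : ℝ} (hp : 0 < p) (hw : 0 < w)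
    (hwp : w < p) (n : ℕ) :
    (-1:ℝ)^n * iteratedDeriv (n+1) ψ p * w^(n+1) ≤ ((n+1).factorial : ℝ) * ψ p := by
  have h1 : ψ (p - w) ≤ TS ψ p w (n+1) := TS_le ψ hψ hp hw hwp (n+1)
  have h2 : TS ψ p w n ≤ ψ p := TS_le_psi ψ hψ hp hw.le n
  have h3 : TS ψ p w (n+1) = TS ψ p w n
      + (-1:ℝ)^(n+1) * iteratedDeriv (n+1) ψ p * w^(n+1) / (((n+1).factorial : ℕ) : ℝ) := by
    rw [TS, TS, Finset.sum_range_succ]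
  have h4 : 0 ≤ ψ (p - w) := hψ.2.1 (p - w) (by linarith)
  have h5 : (-1:ℝ)^n * iteratedDeriv (n+1) ψ p * w^(n+1) / (((n+1).factorial : ℕ) : ℝ) ≤ ψ p := by
    have heq : (-1:ℝ)^(n+1) * iteratedDeriv (n+1) ψ p * w^(n+1) / (((n+1).factorial : ℕ) : ℝ)
        = -((-1:ℝ)^n * iteratedDeriv (n+1) ψ p * w^(n+1) / (((n+1).factorial : ℕ) : ℝ)) := by ring
    rw [heq] at h3
    linarith
  have hfac : (0:ℝ) < (((n+1).factorial : ℕ) : ℝ) := by positivity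
  calc (-1:ℝ)^n * iteratedDeriv (n+1) ψ p * w^(n+1)
      = ((-1:ℝ)^n * iteratedDeriv (n+1) ψ p * w^(n+1) / (((n+1).factorial : ℕ) : ℝ))
        * (((n+1).factorial : ℕ) : ℝ) := by field_simp
    _ ≤ ψ p * (((n+1).factorial : ℕ) : ℝ) := mul_le_mul_of_nonneg_right h5 hfac.le
    _ = ((n+1).factorial : ℝ) * ψ p := by ring

private lemma psi_mono (ψ : ℝ → ℝ) (hψ : IsBernstein ψ) {a b : ℝ} (ha : 0 < a) (hab : a ≤ b) :
    ψ a ≤ ψ b := by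
  rcases eq_or_lt_of_le hab with rfl | hlt
  · exact le_refl _
  · have h1 : ψ (b - (b - a)) ≤ TS ψ b (b - a) 0 :=
      TS_le ψ hψ (by linarith) (by linarith) (by linarith) 0
    have h2 : TS ψ b (b - a) 0 = ψ b := by
      simp [TS, iteratedDeriv_zero]
    have h3 : b - (b - a) = a := by ring
    rw [h3, h2] at h1
    exact h1

/-- the probability generating function of the semi-fractional Sibuya
distribution is `G(z) = 1 − ψ(1−z)/ψ(1)` for `z ∈ [0,1)`. -/
theorem stmt10 (ψ : ℝ → ℝ) (hψ : IsBernstein ψ)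
    (h0 : Filter.Tendsto ψ (nhdsWithin 0 (Set.Ioi 0)) (nhds 0)) (h1 : 0 < ψ 1) :
    ∀ z ∈ Set.Ico (0:ℝ) 1,
      HasSum
        (fun j : ℕ =>
          ((-1 : ℝ) ^ j * iteratedDeriv (j + 1) ψ 1 / ((j + 1).factorial * ψ 1))
            * z ^ (j + 1))
        (1 - ψ (1 - z) / ψ 1) := by
  intro z hz
  obtain ⟨hz0, hz1⟩ := hz
  have hψ1 : (ψ 1) ≠ 0 := h1.ne'
  rcases eq_or_lt_of_le hz0 with rfl | hzpos
  · have hfz : (fun j : ℕ =>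
        ((-1 : ℝ) ^ j * iteratedDeriv (j + 1) ψ 1 / ((j + 1).factorial * ψ 1))
          * (0:ℝ) ^ (j + 1)) = fun _ => (0:ℝ) := by
      funext j; simp
    have hval : (1:ℝ) - ψ (1 - 0) / ψ 1 = 0 := by
      rw [sub_zero, div_self hψ1, sub_self]
    rw [hfz, hval]
    exact hasSum_zero
  · set q : ℝ := (1 + z)/2 with hq_def
    have hq0 : 0 < q := by rw [hq_def]; linarith
    have hzq : z < q := by rw [hq_def]; linarith
    have hq1 : q < 1 := by rw [hq_def]; linarith
    set r : ℝ := z / q with hr_def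
    have hr0 : 0 ≤ r := div_nonneg hzpos.le hq0.le
    have hr1 : r < 1 := (div_lt_one hq0).mpr hzq
    have h1z : 0 < 1 - z := by linarith
    have hTSlow : ∀ n, ψ (1 - z) ≤ TS ψ 1 z n := fun n => TS_le ψ hψ one_pos hzpos hz1 n
    set C : ℝ := ψ 1 * z / (q * (1 - z)) with hC_def
    have hbound : ∀ n : ℕ, TS ψ 1 z n - ψ (1 - z) ≤ C * ((n+1) * r^n) := by
      intro n
      obtain ⟨-, ⟨σ, hσ, hEq⟩⟩ := taylor_both ψ hψ.1 one_pos hzpos hz1 n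
      have hσl : 1 - z < σ := hσ.1
      have hσu : σ < 1 := hσ.2
      have hσ0 : 0 < σ := by linarith
      set D : ℝ := (-1:ℝ)^n * iteratedDeriv (n+1) ψ σ with hD_def
      have hD0 : 0 ≤ D := sign_term ψ hψ hσ0 n
      have hfac : (0:ℝ) < (n.factorial : ℝ) := by positivity
      have hE : TS ψ 1 z n - ψ (1 - z) = D * (σ - (1 - z))^n / (n.factorial:ℝ) * z := by
        have hh : (-1:ℝ)^(n+1) * iteratedDeriv (n+1) ψ σ * (σ-(1-z))^n / (n.factorial:ℝ) * z
            = -(D * (σ-(1-z))^n / (n.factorial:ℝ) * z) := by rw [hD_def]; ring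
        rw [hh] at hEq; linarith
      have hqσ : 0 < q * σ := by positivity
      have hB : D * (q*σ)^(n+1) ≤ ((n+1).factorial : ℝ) * ψ 1 := by
        have l1 := lemB ψ hψ hσ0 (w := q*σ) (by positivity) (by nlinarith) n
        have l2 : ψ σ ≤ ψ 1 := psi_mono ψ hψ hσ0 hσu.le
        have l3 : (0:ℝ) ≤ ((n+1).factorial : ℝ) := by positivity
        calc D * (q*σ)^(n+1) ≤ ((n+1).factorial:ℝ) * ψ σ := l1
          _ ≤ ((n+1).factorial:ℝ) * ψ 1 := mul_le_mul_of_nonneg_left l2 l3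
      have hzσ : (z*σ)^n = r^n * (q*σ)^n := by
        rw [← mul_pow]; congr 1; rw [hr_def]; field_simp
      have h4 : D * (z*σ)^n * (q*σ) ≤ ((n+1).factorial : ℝ) * ψ 1 * r^n := by
        calc D * (z*σ)^n * (q*σ) = D * (q*σ)^(n+1) * r^n := by rw [hzσ]; ring
          _ ≤ ((n+1).factorial : ℝ) * ψ 1 * r^n :=
            mul_le_mul_of_nonneg_right hB (pow_nonneg hr0 n)
      have s1 : D * (σ - (1-z))^n / (n.factorial:ℝ) * z ≤ D * (z*σ)^n / (n.factorial:ℝ) * z := by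
        apply mul_le_mul_of_nonneg_right _ hzpos.le
        apply (div_le_div_iff_of_pos_right hfac).mpr
        apply mul_le_mul_of_nonneg_left _ hD0
        apply pow_le_pow_left₀ (by linarith)
        nlinarith
      have hD2 : D * (z*σ)^n ≤ ((n+1).factorial:ℝ) * ψ 1 * r^n / (q*σ) := (le_div_iff₀ hqσ).mpr h4
      have hq1z : 0 < q * (1-z) := by positivity
      have hnum : (0:ℝ) ≤ ((n+1).factorial:ℝ) * ψ 1 * r^n := by
        apply mul_nonneg (mul_nonneg (by positivity) h1.le) (pow_nonneg hr0 n)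
      have hD3 : ((n+1).factorial:ℝ) * ψ 1 * r^n / (q*σ)
          ≤ ((n+1).factorial:ℝ) * ψ 1 * r^n / (q*(1-z)) := by
        apply div_le_div_of_nonneg_left hnum hq1z
        nlinarith
      have s2 : D * (z*σ)^n / (n.factorial:ℝ) * z ≤ C * ((n+1) * r^n) := by
        calc D * (z*σ)^n / (n.factorial:ℝ) * z
            ≤ (((n+1).factorial:ℝ) * ψ 1 * r^n / (q*(1-z))) / (n.factorial:ℝ) * z := by
              apply mul_le_mul_of_nonneg_right _ hzpos.le
              exact (div_le_div_iff_of_pos_right hfac).mpr (hD2.trans hD3)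
          _ = C * ((n+1) * r^n) := by
              rw [hC_def, Nat.factorial_succ]; push_cast; field_simp
      rw [hE]
      exact s1.trans s2
    have hC0 : Tendsto (fun n : ℕ => C * (((n:ℝ)+1) * r^n)) atTop (nhds 0) := by
      have ha := tendsto_pow_const_mul_const_pow_of_lt_one 1 hr0 hr1
      have hb := tendsto_pow_atTop_nhds_zero_of_lt_one hr0 hr1
      have h2 : Tendsto (fun n : ℕ => (n:ℝ)^1 * r^n + r^n) atTop (nhds (0+0)) := ha.add hb
      rw [add_zero] at h2
      have hsum : Tendsto (fun n : ℕ => ((n:ℝ)+1) * r^n) atTop (nhds 0) :=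
        h2.congr (fun n => by ring)
      have := hsum.const_mul C
      simpa using this
    have hTendTS : Tendsto (fun n => TS ψ 1 z n) atTop (nhds (ψ (1 - z))) := by
      have hsq : Tendsto (fun n => TS ψ 1 z n - ψ (1-z)) atTop (nhds 0) :=
        squeeze_zero (fun n => by linarith [hTSlow n]) hbound hC0
      have h2 := hsq.add_const (ψ (1-z))
      rw [zero_add] at h2
      exact h2.congr (fun n => by ring)
    have hps : ∀ m : ℕ, ∑ j ∈ Finset.range m,
        ((-1:ℝ)^j * iteratedDeriv (j+1) ψ 1 / (((j+1).factorial : ℕ) * ψ 1)) * z^(j+1)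
        = 1 - TS ψ 1 z m / ψ 1 := by
      intro m
      rw [TS, Finset.sum_range_succ']
      have hz0' : (-1:ℝ)^0 * iteratedDeriv 0 ψ 1 * z^0 / ((Nat.factorial 0 : ℕ):ℝ) = ψ 1 := by
        simp [iteratedDeriv_zero]
      rw [hz0']
      have hterm : ∀ j ∈ Finset.range m,
          ((-1:ℝ)^j * iteratedDeriv (j+1) ψ 1 / (((j+1).factorial : ℕ) * ψ 1)) * z^(j+1)
          = -(((-1:ℝ)^(j+1) * iteratedDeriv (j+1) ψ 1 * z^(j+1) / (((j+1).factorial:ℕ):ℝ)) / ψ 1) := by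
        intro j _
        have hfj : (((j+1).factorial : ℕ) : ℝ) ≠ 0 := by positivity
        rw [pow_succ]
        field_simp
        ring
      rw [Finset.sum_congr rfl hterm]
      rw [Finset.sum_neg_distrib, ← Finset.sum_div]
      field_simp
      ring
    rw [hasSum_iff_tendsto_nat_of_nonneg]
    · have hT : Tendsto (fun m => 1 - TS ψ 1 z m / ψ 1) atTop (nhds (1 - ψ (1-z)/ψ 1)) :=
        tendsto_const_nhds.sub (hTendTS.div_const (ψ 1))
      exact hT.congr (fun m => (hps m).symm)
    · intro j
      apply mul_nonneg _ (pow_nonneg hzpos.le _)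
      apply div_nonneg _ (mul_nonneg (by positivity) h1.le)
      exact sign_term ψ hψ one_pos j
end
end

section
/- Let f : (0,∞) → (0,∞) be a bijective C^∞ function such that its derivative f′ is a Bernstein function and f^{(n)}(x) ≠ 0 for all n ∈ ℕ and x > 0. Then the inverse function f^{−1} : (0,∞) → (0,∞) is a Bernstein function, and moreover (f^{−1})^{(n)}(x) ≠ 0 for all n ∈ ℕ and x > 0. -/
open MeasureTheory Set Filter Real

noncomputable section

namespace Stmt12Aux

/-- the `j`-th "atom": `(-1)^(j+1) f^{(j+1)} ∘ g`, positive for `j ≥ 1`. -/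
def atomF (f g : ℝ → ℝ) (j : ℕ) : ℝ → ℝ := fun y => (-1:ℝ)^(j+1) * iteratedDeriv (j+1) f (g y)

/-- `f' ∘ g`. -/
def bF (f g : ℝ → ℝ) : ℝ → ℝ := fun y => deriv f (g y)

/-- value of a term `(js, p)`: `(∏_{j∈js} atom j) / b^p`. -/
def evalT (f g : ℝ → ℝ) (t : List ℕ × ℕ) : ℝ → ℝ :=
  fun y => (t.1.map (fun j => atomF f g j y)).prod / (bF f g y)^t.2

/-- all single-position increments of a list. -/
def incList : List ℕ → List (List ℕ)
  | [] => []
  | j :: tl => ((j+1) :: tl) :: (incList tl).map (fun l => j :: l)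

/-- the terms of minus the derivative of a term. -/
def DT (t : List ℕ × ℕ) : List (List ℕ × ℕ) :=
  ((incList t.1).map (fun l => (l, t.2+1))) ++ (List.replicate t.2 ((1 :: t.1), t.2+2))

variable {f g : ℝ → ℝ}

lemma atom_hasDerivAt
    (HfD : ∀ k, ∀ x ∈ Ioi (0:ℝ), HasDerivAt (iteratedDeriv k f) (iteratedDeriv (k+1) f x) x)
    (HgD : ∀ y ∈ Ioi (0:ℝ), HasDerivAt g ((bF f g y)⁻¹) y)
    (Hmaps : ∀ y ∈ Ioi (0:ℝ), g y ∈ Ioi 0) (j : ℕ) {y : ℝ} (hy : y ∈ Ioi (0:ℝ)) :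
    HasDerivAt (atomF f g j) (-(atomF f g (j+1) y) * (bF f g y)⁻¹) y := by
  have h1 := (HfD (j+1) (g y) (Hmaps y hy)).comp y (HgD y hy)
  have h2 := h1.const_mul ((-1:ℝ)^(j+1))
  have : -(atomF f g (j+1) y) * (bF f g y)⁻¹
      = (-1:ℝ)^(j+1) * (iteratedDeriv (j+1+1) f (g y) * (bF f g y)⁻¹) := by
    simp [atomF, pow_succ]; ring
  rw [this]
  exact h2

lemma prod_hasDerivAt
    (HfD : ∀ k, ∀ x ∈ Ioi (0:ℝ), HasDerivAt (iteratedDeriv k f) (iteratedDeriv (k+1) f x) x)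
    (HgD : ∀ y ∈ Ioi (0:ℝ), HasDerivAt g ((bF f g y)⁻¹) y)
    (Hmaps : ∀ y ∈ Ioi (0:ℝ), g y ∈ Ioi 0) (js : List ℕ) {y : ℝ} (hy : y ∈ Ioi (0:ℝ)) :
    HasDerivAt (fun y => (js.map (fun j => atomF f g j y)).prod)
      (-(((incList js).map (fun l => (l.map (fun j => atomF f g j y)).prod)).sum) * (bF f g y)⁻¹)
      y := by
  induction js with
  | nil =>
      simp only [List.map_nil, List.prod_nil, incList, List.sum_nil]
      simpa using hasDerivAt_const y (1:ℝ)
  | cons j tl ih =>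
      have ha := atom_hasDerivAt HfD HgD Hmaps j hy
      have h := ha.fun_mul ih
      have heq : (fun y => (((j :: tl)).map (fun j => atomF f g j y)).prod)
          = fun y => atomF f g j y * (tl.map (fun j => atomF f g j y)).prod := by
        funext z; simp
      rw [heq]
      refine h.congr_deriv (Eq.symm ?_)
      simp only [incList, List.map_cons, List.sum_cons, List.map_map]
      have h2 : ((incList tl).map (fun l => (((j :: l)).map (fun j => atomF f g j y)).prod)).sum
          = atomF f g j y * ((incList tl).map (fun l => (l.map (fun j => atomF f g j y)).prod)).sum := by
        rw [show ((incList tl).map (fun l => (((j :: l)).map (fun j => atomF f g j y)).prod))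
            = ((incList tl).map (fun l => atomF f g j y * (l.map (fun j => atomF f g j y)).prod)) from
          List.map_congr_left (fun l _ => by simp), List.sum_map_mul_left]
      simp only [Function.comp_def]
      rw [h2]
      simp only [List.prod_cons]
      ring

lemma b_hasDerivAt
    (HfD : ∀ k, ∀ x ∈ Ioi (0:ℝ), HasDerivAt (iteratedDeriv k f) (iteratedDeriv (k+1) f x) x)
    (HgD : ∀ y ∈ Ioi (0:ℝ), HasDerivAt g ((bF f g y)⁻¹) y)
    (Hmaps : ∀ y ∈ Ioi (0:ℝ), g y ∈ Ioi 0) {y : ℝ} (hy : y ∈ Ioi (0:ℝ)) :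
    HasDerivAt (bF f g) (atomF f g 1 y * (bF f g y)⁻¹) y := by
  have h1 := (HfD 1 (g y) (Hmaps y hy)).comp y (HgD y hy)
  have heq : bF f g = fun y => iteratedDeriv 1 f (g y) := by
    funext z; simp [bF, iteratedDeriv_one]
  have ha : atomF f g 1 y = iteratedDeriv 2 f (g y) := by simp [atomF]
  have h3 : bF f g =ᶠ[nhds y] (iteratedDeriv 1 f ∘ g) :=
    Filter.Eventually.of_forall fun z => by simp [bF, Function.comp, iteratedDeriv_one]
  have h4 := h1.congr_of_eventuallyEq h3
  rw [ha]
  exact h4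

lemma evalT_hasDerivAt
    (HfD : ∀ k, ∀ x ∈ Ioi (0:ℝ), HasDerivAt (iteratedDeriv k f) (iteratedDeriv (k+1) f x) x)
    (HgD : ∀ y ∈ Ioi (0:ℝ), HasDerivAt g ((bF f g y)⁻¹) y)
    (Hmaps : ∀ y ∈ Ioi (0:ℝ), g y ∈ Ioi 0)
    (Hb : ∀ y ∈ Ioi (0:ℝ), bF f g y ≠ 0)
    (js : List ℕ) (q : ℕ) {y : ℝ} (hy : y ∈ Ioi (0:ℝ)) :
    HasDerivAt (evalT f g (js, q+1))
      (-(((DT (js, q+1)).map (fun u => evalT f g u y)).sum)) y := by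
  have hP := prod_hasDerivAt HfD HgD Hmaps js hy
  have hb := b_hasDerivAt HfD HgD Hmaps hy
  have hbpow : HasDerivAt (fun y => (bF f g y)^(q+1))
      ((q+1 : ℕ) * (bF f g y)^q * (atomF f g 1 y * (bF f g y)⁻¹)) y := by
    simpa using hb.fun_pow (q+1)
  have hbne := Hb y hy
  have hpowne : (bF f g y)^(q+1) ≠ 0 := pow_ne_zero _ hbne
  have h := hP.fun_div hbpow hpowne
  have heq : evalT f g (js, q+1) = fun y =>
      (js.map (fun j => atomF f g j y)).prod / (bF f g y)^(q+1) := rfl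
  rw [heq]
  refine h.congr_deriv (Eq.symm ?_)
  -- arithmetic identity
  set P := (js.map (fun j => atomF f g j y)).prod with hPdef
  set S := ((incList js).map (fun l => (l.map (fun j => atomF f g j y)).prod)).sum with hSdef
  set b := bF f g y
  set a1 := atomF f g 1 y
  have hDT : ((DT (js, q+1)).map (fun u => evalT f g u y)).sum
      = S / b^(q+2) + (q+1 : ℕ) * ((a1 * P) / b^(q+3)) := by
    simp only [DT, List.map_append, List.sum_append, List.map_map, List.map_replicate,
      List.sum_replicate, nsmul_eq_mul]
    have h1 : (List.map ((fun u => evalT f g u y) ∘ fun l => (l, q + 1 + 1)) (incList js)).sum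
        = S / b^(q+2) := by
      rw [show (List.map ((fun u => evalT f g u y) ∘ fun l => (l, q + 1 + 1)) (incList js))
          = (incList js).map (fun l => (l.map (fun j => atomF f g j y)).prod * (b^(q+2))⁻¹) from
        List.map_congr_left (fun l _ => by simp [evalT, div_eq_mul_inv]; exact Or.inl rfl),
        List.sum_map_mul_right, hSdef, div_eq_mul_inv]
    have h2 : evalT f g (1 :: js, q + 1 + 2) y = a1 * P / b^(q+3) := by
      simp [evalT, List.prod_cons, div_eq_mul_inv]
      rfl
    rw [h1, h2]
  rw [hDT]
  field_simp
  ring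

lemma sum_map_flatMap {α β : Type*} (L : List α) (F : α → List β) (G : β → ℝ) :
    ((L.flatMap F).map G).sum = (L.map (fun t => ((F t).map G).sum)).sum := by
  induction L with
  | nil => simp
  | cons a tl ih => simp [List.flatMap_cons, ih]

lemma sum_map_neg {α : Type*} (L : List α) (F : α → ℝ) :
    (L.map (fun t => -(F t))).sum = -((L.map F).sum) := by
  induction L with
  | nil => simp
  | cons a tl ih => simp [ih]; ring

lemma listSum_hasDerivAt {α : Type*} (L : List α) (F : α → ℝ → ℝ) (F' : α → ℝ) {y : ℝ}
    (h : ∀ t ∈ L, HasDerivAt (F t) (F' t) y) :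
    HasDerivAt (fun z => (L.map (fun t => F t z)).sum) ((L.map F').sum) y := by
  induction L with
  | nil => simpa using hasDerivAt_const y (0:ℝ)
  | cons a tl ih =>
      have h1 := (h a List.mem_cons_self).fun_add (ih (fun t ht => h t (List.mem_cons_of_mem a ht)))
      simpa using h1

lemma incList_ge (js : List ℕ) (hjs : ∀ j ∈ js, 1 ≤ j) :
    ∀ l ∈ incList js, ∀ j ∈ l, 1 ≤ j := by
  induction js with
  | nil => simp [incList]
  | cons a tl ih =>
      intro l hl
      simp only [incList, List.mem_cons, List.mem_map] at hl
      rcases hl with rfl | ⟨l', hl', rfl⟩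
      · intro j hj
        rcases List.mem_cons.1 hj with rfl | hj
        · omega
        · exact hjs _ (List.mem_cons_of_mem _ hj)
      · intro j hj
        rcases List.mem_cons.1 hj with rfl | hj
        · exact hjs _ List.mem_cons_self
        · exact ih (fun j hj => hjs _ (List.mem_cons_of_mem _ hj)) l' hl' j hj

/-- Good term lists: nonempty, each term has all indices `≥ 1` and exponent `≥ 1`. -/
def GoodL (L : List (List ℕ × ℕ)) : Prop :=
  L ≠ [] ∧ ∀ t ∈ L, (∀ j ∈ t.1, 1 ≤ j) ∧ 1 ≤ t.2

lemma goodL_DT {t : List ℕ × ℕ} (h1 : ∀ j ∈ t.1, 1 ≤ j) (h2 : 1 ≤ t.2) :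
    DT t ≠ [] ∧ ∀ u ∈ DT t, (∀ j ∈ u.1, 1 ≤ j) ∧ 1 ≤ u.2 := by
  constructor
  · intro h
    have : ((1 :: t.1), t.2+2) ∈ DT t := by
      apply List.mem_append_right
      exact List.mem_replicate.2 ⟨by omega, rfl⟩
    rw [h] at this
    exact absurd this List.not_mem_nil
  · intro u hu
    rcases List.mem_append.1 hu with hu | hu
    · obtain ⟨l, hl, rfl⟩ := List.mem_map.1 hu
      exact ⟨incList_ge t.1 h1 l hl, by omega⟩
    · have := (List.mem_replicate.1 hu).2
      subst this
      refine ⟨?_, by omega⟩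
      intro j hj
      rcases List.mem_cons.1 hj with rfl | hj
      · omega
      · exact h1 j hj

/-- The key induction: `g^{(n+1)} = (-1)^n ∑_{t ∈ L} eval t` on `(0,∞)` for a good list `L`. -/
lemma key
    (HfD : ∀ k, ∀ x ∈ Ioi (0:ℝ), HasDerivAt (iteratedDeriv k f) (iteratedDeriv (k+1) f x) x)
    (HgD : ∀ y ∈ Ioi (0:ℝ), HasDerivAt g ((bF f g y)⁻¹) y)
    (Hmaps : ∀ y ∈ Ioi (0:ℝ), g y ∈ Ioi 0)
    (Hb : ∀ y ∈ Ioi (0:ℝ), bF f g y ≠ 0) :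
    ∀ n : ℕ, ∃ L : List (List ℕ × ℕ), GoodL L ∧
      ∀ y ∈ Ioi (0:ℝ), iteratedDeriv (n+1) g y = (-1:ℝ)^n * (L.map (fun t => evalT f g t y)).sum := by
  intro n
  induction n with
  | zero =>
      refine ⟨[([], 1)], ⟨by simp, by simp⟩, ?_⟩
      intro y hy
      have := (HgD y hy).deriv
      simp [iteratedDeriv_one, this, evalT]
  | succ n ih =>
      obtain ⟨L, ⟨hLne, hLgood⟩, hL⟩ := ih
      refine ⟨L.flatMap DT, ?_, ?_⟩
      · constructor
        · obtain ⟨t, htL⟩ := List.exists_mem_of_ne_nil L hLne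
          intro h
          have h2 := (goodL_DT (hLgood t htL).1 (hLgood t htL).2).1
          obtain ⟨u, hu⟩ := List.exists_mem_of_ne_nil _ h2
          have : u ∈ L.flatMap DT := List.mem_flatMap.2 ⟨t, htL, hu⟩
          rw [h] at this
          exact absurd this List.not_mem_nil
        · intro u hu
          obtain ⟨t, htL, hu⟩ := List.mem_flatMap.1 hu
          exact (goodL_DT (hLgood t htL).1 (hLgood t htL).2).2 u hu
      · intro y hy
        -- derivative of the sum
        have hsum : HasDerivAt (fun z => (L.map (fun t => evalT f g t z)).sum)
            ((L.map (fun t => -(((DT t).map (fun u => evalT f g u y)).sum))).sum) y := by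
          apply listSum_hasDerivAt
          intro t ht
          have h2 := (hLgood t ht).2
          obtain ⟨q, hq⟩ : ∃ q, t.2 = q + 1 := ⟨t.2 - 1, by omega⟩
          have := evalT_hasDerivAt HfD HgD Hmaps Hb t.1 q hy
          rw [show t = (t.1, q+1) from by rw [← hq]] at ht ⊢
          exact this
        have hconst : HasDerivAt (fun z => (-1:ℝ)^n * (L.map (fun t => evalT f g t z)).sum)
            ((-1:ℝ)^n * (L.map (fun t => -(((DT t).map (fun u => evalT f g u y)).sum))).sum) y :=
          hsum.const_mul _
        have hev : iteratedDeriv (n+1) g =ᶠ[nhds y]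
            (fun z => (-1:ℝ)^n * (L.map (fun t => evalT f g t z)).sum) := by
          filter_upwards [isOpen_Ioi.mem_nhds hy] with z hz using hL z hz
        rw [iteratedDeriv_succ, hev.deriv_eq, hconst.deriv,
          sum_map_neg L (fun t => ((DT t).map (fun u => evalT f g u y)).sum),
          sum_map_flatMap L DT (fun t => evalT f g t y), pow_succ]
        ring

end Stmt12Aux

open Stmt12Aux

/-- if `f : (0,∞) → (0,∞)` is a bijective `C^∞` function whose derivative
is a Bernstein function and whose derivatives never vanish, then the inverse `f⁻¹` is a
Bernstein function with non-vanishing derivatives. -/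


theorem stmt12 (f g : ℝ → ℝ)
    (hbij : Set.BijOn f (Set.Ioi 0) (Set.Ioi 0))
    (hsmooth : ContDiffOn ℝ (⊤ : ℕ∞) f (Set.Ioi 0))
    (hf' : IsBernstein (deriv f))
    (hne : ∀ n : ℕ, 0 < n → ∀ x > (0:ℝ), iteratedDeriv n f x ≠ 0)
    (hinv : Set.InvOn g f (Set.Ioi 0) (Set.Ioi 0)) :
    IsBernstein g ∧ ∀ n : ℕ, 0 < n → ∀ x > (0:ℝ), iteratedDeriv n g x ≠ 0 := by
  have h1T : ((⊤:ℕ∞) : WithTop ℕ∞) ≠ 0 := by simp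
  obtain ⟨hfC, hfpos, hfsign⟩ := hf'
  have hgmaps : ∀ y ∈ Ioi (0:ℝ), g y ∈ Ioi 0 := by
    intro y hy
    obtain ⟨x, hx, rfl⟩ := hbij.surjOn hy
    rw [hinv.1 hx]; exact hx
  have hdne : ∀ x ∈ Ioi (0:ℝ), deriv f x ≠ 0 := by
    intro x hx
    have := hne 1 one_pos x hx
    rwa [iteratedDeriv_one] at this
  have hgC : ∀ y ∈ Ioi (0:ℝ), ContDiffAt ℝ (⊤:ℕ∞) g y := by
    intro y0 hy0
    obtain ⟨x0, hx0, rfl⟩ := hbij.surjOn hy0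
    have hcf : ContDiffAt ℝ (⊤:ℕ∞) f x0 := hsmooth.contDiffAt (isOpen_Ioi.mem_nhds hx0)
    have hder : HasDerivAt f (deriv f x0) x0 := (hcf.differentiableAt h1T).hasDerivAt
    have hF := hder.hasFDerivAt_equiv (hdne x0 hx0)
    have hφ : ContDiffAt ℝ (⊤:ℕ∞) (hcf.localInverse hF h1T) (f x0) :=
      hcf.to_localInverse hF h1T
    have hright : ∀ᶠ z in nhds (f x0), f ((hcf.localInverse hF h1T) z) = z :=
      (hcf.hasStrictFDerivAt' hF h1T).eventually_right_inverse
    have happ : (hcf.localInverse hF h1T) (f x0) = x0 := hcf.localInverse_apply_image hF h1T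
    have hcont : ContinuousAt (hcf.localInverse hF h1T) (f x0) := hφ.continuousAt
    have hmem : ∀ᶠ z in nhds (f x0), (hcf.localInverse hF h1T) z ∈ Ioi (0:ℝ) :=
      hcont.eventually_mem (isOpen_Ioi.mem_nhds (by rw [happ]; exact hx0))
    have hopen : ∀ᶠ z in nhds (f x0), z ∈ Ioi (0:ℝ) := isOpen_Ioi.mem_nhds (hbij.mapsTo hx0)
    have heqv : g =ᶠ[nhds (f x0)] (hcf.localInverse hF h1T) := by
      filter_upwards [hright, hmem, hopen] with z h1 h2 h3
      apply hbij.injOn (hgmaps z h3) h2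
      rw [hinv.2 h3, h1]
    exact hφ.congr_of_eventuallyEq heqv
  have hgD : ∀ y ∈ Ioi (0:ℝ), HasDerivAt g ((bF f g y)⁻¹) y := by
    intro y hy
    have hgy := hgmaps y hy
    have hder : HasDerivAt f (deriv f (g y)) (g y) :=
      ((hsmooth.contDiffAt (isOpen_Ioi.mem_nhds hgy)).differentiableAt h1T).hasDerivAt
    exact HasDerivAt.of_local_left_inverse ((hgC y hy).continuousAt) hder (hdne _ hgy)
      (by filter_upwards [isOpen_Ioi.mem_nhds hy] with z hz using hinv.2 hz)
  have hfiter : ∀ k, ContDiffOn ℝ (⊤:ℕ∞) (iteratedDeriv k f) (Ioi 0) := by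
    intro k
    induction k with
    | zero => simpa [iteratedDeriv_zero] using hsmooth
    | succ k ih =>
        rw [iteratedDeriv_succ]
        exact ih.deriv_of_isOpen isOpen_Ioi (by simp)
  have HfD : ∀ k, ∀ x ∈ Ioi (0:ℝ), HasDerivAt (iteratedDeriv k f) (iteratedDeriv (k+1) f x) x := by
    intro k x hx
    have hd : DifferentiableAt ℝ (iteratedDeriv k f) x :=
      ((hfiter k).contDiffAt (isOpen_Ioi.mem_nhds hx)).differentiableAt h1T
    rw [iteratedDeriv_succ]
    exact hd.hasDerivAt
  have hbpos : ∀ y ∈ Ioi (0:ℝ), 0 < bF f g y := by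
    intro y hy
    have hgy := hgmaps y hy
    exact lt_of_le_of_ne (hfpos (g y) hgy) (Ne.symm (hdne _ hgy))
  have hatom : ∀ k : ℕ, ∀ y ∈ Ioi (0:ℝ), 0 < atomF f g (k+1) y := by
    intro k y hy
    have hgy := hgmaps y hy
    have h0 := hfsign (k+1) (Nat.succ_pos k) (g y) hgy
    rw [← iteratedDeriv_succ'] at h0
    have hne2 : iteratedDeriv (k+2) f (g y) ≠ 0 := hne (k+2) (by omega) (g y) hgy
    have hA : atomF f g (k+1) y = (-1:ℝ)^k * iteratedDeriv (k+2) f (g y) := by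
      simp [atomF, pow_succ]
    rw [hA]
    refine lt_of_le_of_ne ?_ (Ne.symm (mul_ne_zero (pow_ne_zero _ (by norm_num)) hne2))
    simpa using h0
  have hbne : ∀ y ∈ Ioi (0:ℝ), bF f g y ≠ 0 := fun y hy => (hbpos y hy).ne'
  have keyf := Stmt12Aux.key HfD hgD hgmaps hbne
  have hevalpos : ∀ t : List ℕ × ℕ, (∀ j ∈ t.1, 1 ≤ j) → ∀ y ∈ Ioi (0:ℝ), 0 < evalT f g t y := by
    intro t ht y hy
    apply div_pos
    · apply List.prod_pos
      intro x hx
      obtain ⟨j, hj, rfl⟩ := List.mem_map.1 hx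
      obtain ⟨k, rfl⟩ : ∃ k, j = k+1 := ⟨j-1, by have := ht j hj; omega⟩
      exact hatom k y hy
    · exact pow_pos (hbpos y hy) _
  have hmain : ∀ n : ℕ, ∀ y ∈ Ioi (0:ℝ), 0 < (-1:ℝ)^n * iteratedDeriv (n+1) g y := by
    intro n y hy
    obtain ⟨L, ⟨hLne, hLg⟩, hL⟩ := keyf n
    rw [hL y hy, ← mul_assoc, ← pow_add, show n + n = 2*n from by omega, pow_mul]
    norm_num
    apply List.sum_pos
    · intro x hx
      obtain ⟨t, htL, rfl⟩ := List.mem_map.1 hx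
      exact hevalpos t (hLg t htL).1 y hy
    · intro h
      exact hLne (List.map_eq_nil_iff.1 h)
  refine ⟨⟨fun y hy => (hgC y hy).contDiffWithinAt, fun x hx => (hgmaps x hx).le, ?_⟩, ?_⟩
  · intro n hn x hx
    obtain ⟨m, rfl⟩ : ∃ m, n = m+1 := ⟨n-1, by omega⟩
    simpa using (hmain m x hx).le
  · intro n hn x hx
    obtain ⟨m, rfl⟩ : ∃ m, n = m+1 := ⟨n-1, by omega⟩
    have h := hmain m x hx
    intro h0
    rw [h0, mul_zero] at h
    exact lt_irrefl 0 h
end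
end
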